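/- arXiv:2001.01981 — 4 statements merged into one kernel-verified Lean document; each statement's English description precedes it below -/
import Mathlib

section
/- Suppose a ∈ {1/6, 1/4, 1/3, 1/2}. Then the Riemann hypothesis (every non-real zero of the Riemann zeta function ζ(s) has real part 1/2) holds if and only if every non-real zero of Q(s,a) lies on the critical line Re s = 1/2. -/
open Complex Real Set HurwitzZeta

/-- The quadrilateral zeta function `Q(s,a)`, defined by
`2Q(s,a) = ζ(s,a) + ζ(s,1-a) + Li_s(e^{2πia}) + Li_s(e^{2πi(1-a)})`. -/
noncomputable def Q (a : ℝ) (s : ℂ) : ℂ :=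
  (hurwitzZeta (a : UnitAddCircle) s + hurwitzZeta ((1 - a : ℝ) : UnitAddCircle) s
    + expZeta (a : UnitAddCircle) s + expZeta ((1 - a : ℝ) : UnitAddCircle) s) / 2

namespace QAux

/-! ### Modulus lemmas for the elementary factors -/

lemma normSq_exp_sub_one (w : ℂ) :
    Complex.normSq (Complex.exp w - 1)
      = Real.exp w.re ^ 2 - 2 * Real.exp w.re * Real.cos w.im + 1 := by
  simp only [Complex.normSq_apply, Complex.sub_re, Complex.sub_im, Complex.exp_re,
    Complex.exp_im, Complex.one_re, Complex.one_im]
  nlinarith [Real.sin_sq_add_cos_sq w.im]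

lemma cpow_eq_exp {b : ℝ} (hb : 0 < b) (u : ℂ) :
    (b : ℂ) ^ u = Complex.exp ((Real.log b : ℂ) * u) := by
  rw [Complex.cpow_def_of_ne_zero (by exact_mod_cast hb.ne'), Complex.ofReal_log hb.le]

lemma abs_cpow_one_sub_lt {b : ℝ} (hb : 1 < b) {s : ℂ} (hs : 1 / 2 < s.re) :
    ‖(b : ℂ) ^ (1 - s)‖ < ‖(b : ℂ) ^ s‖ := by
  have hb0 : (0 : ℝ) < b := by linarith
  rw [Complex.norm_cpow_eq_rpow_re_of_pos hb0, Complex.norm_cpow_eq_rpow_re_of_pos hb0]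
  apply Real.rpow_lt_rpow_left_iff hb |>.mpr
  simp only [Complex.sub_re, Complex.one_re]
  linarith

lemma abs_cpow_sub_one_lt {b : ℝ} (hb : 1 < b) {s : ℂ} (hs : 1 / 2 < s.re) :
    ‖(b : ℂ) ^ (1 - s) - 1‖ < ‖(b : ℂ) ^ s - 1‖ := by
  have hb0 : (0 : ℝ) < b := by linarith
  have hL : 0 < Real.log b := Real.log_pos hb
  set L := Real.log b with hLdef
  set σ := s.re with hσ
  set t := s.im with ht
  have e1 : (b : ℂ) ^ s = Complex.exp ((L : ℂ) * s) := cpow_eq_exp hb0 s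
  have e2 : (b : ℂ) ^ (1 - s) = Complex.exp ((L : ℂ) * (1 - s)) := cpow_eq_exp hb0 _
  have hre1 : ((L : ℂ) * s).re = L * σ := by simp [Complex.mul_re, hσ]
  have him1 : ((L : ℂ) * s).im = L * t := by simp [Complex.mul_im, ht]
  have hre2 : ((L : ℂ) * (1 - s)).re = L * (1 - σ) := by simp [Complex.mul_re, hσ]
  have him2 : ((L : ℂ) * (1 - s)).im = -(L * t) := by simp [Complex.mul_im, ht]
  have n1 : Complex.normSq ((b : ℂ) ^ s - 1)
      = Real.exp (L * σ) ^ 2 - 2 * Real.exp (L * σ) * Real.cos (L * t) + 1 := by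
    rw [e1, normSq_exp_sub_one, hre1, him1]
  have n2 : Complex.normSq ((b : ℂ) ^ (1 - s) - 1)
      = Real.exp (L * (1 - σ)) ^ 2 - 2 * Real.exp (L * (1 - σ)) * Real.cos (L * t) + 1 := by
    rw [e2, normSq_exp_sub_one, hre2, him2, Real.cos_neg]
  set x := Real.exp (L * σ) with hx
  set y := Real.exp (L * (1 - σ)) with hy
  set c := Real.cos (L * t) with hc
  have hxy : y < x := by
    apply Real.exp_lt_exp.mpr
    nlinarith
  have hy0 : 0 < y := Real.exp_pos _
  have hprod : 1 < x * y := by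
    rw [hx, hy, ← Real.exp_add]
    have : L * σ + L * (1 - σ) = L := by ring
    rw [this]
    calc (1 : ℝ) = Real.exp 0 := (Real.exp_zero).symm
    _ < Real.exp L := Real.exp_lt_exp.mpr hL
  have hcle : c ≤ 1 := Real.cos_le_one _
  have hsum : 2 < x + y := by nlinarith [sq_nonneg (x - y)]
  have hlt : Complex.normSq ((b : ℂ) ^ (1 - s) - 1) < Complex.normSq ((b : ℂ) ^ s - 1) := by
    rw [n1, n2]; nlinarith
  have := (Complex.sq_norm ((b : ℂ) ^ (1 - s) - 1)) ▸ (Complex.sq_norm ((b : ℂ) ^ s - 1)) ▸ hlt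
  exact lt_of_pow_lt_pow_left₀ 2 (norm_nonneg _) this

/-! ### Dirichlet series building blocks -/

lemma hasSum_zeta' {s : ℂ} (hs : 1 < s.re) :
    HasSum (fun n : ℕ ↦ 1 / (n : ℂ) ^ s) (riemannZeta s) := by
  have h := hasSum_hurwitzZeta_of_one_lt_re (a := 0) (by simp) hs
  simpa [hurwitzZeta_zero] using h

lemma hasSum_dvd {s : ℂ} (hs : 1 < s.re) {d : ℕ} (hd : 0 < d) :
    HasSum (fun n : ℕ ↦ if d ∣ n then 1 / (n : ℂ) ^ s else 0)
      (1 / (d : ℂ) ^ s * riemannZeta s) := by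
  have h := (hasSum_zeta' hs).mul_left (1 / (d : ℂ) ^ s)
  have hinj : Function.Injective (fun n : ℕ ↦ d * n) := fun a b hab => by
    simpa [Nat.mul_right_inj hd.ne'] using hab
  refine (Function.Injective.hasSum_iff hinj ?_).mp ?_
  · intro x hx
    rw [if_neg]
    intro hdx
    exact hx ⟨x / d, (Nat.mul_div_cancel' hdx)⟩
  · convert h using 1
    · rfl
    funext n
    simp only [Function.comp_apply]
    rw [if_pos ⟨n, rfl⟩, Nat.cast_mul, natCast_mul_natCast_cpow, one_div_mul_one_div]

lemma hasSum_res {s : ℂ} (hs : 1 < s.re) {N r : ℕ} (h0 : 0 < r) (hrN : r < N) :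
    HasSum (fun n : ℕ ↦ if n % N = r then (N : ℂ) ^ s * (1 / (n : ℂ) ^ s) else 0)
      (hurwitzZeta ((r / N : ℝ) : UnitAddCircle) s) := by
  have hN : 0 < N := h0.trans hrN
  have hNR : (0 : ℝ) < N := by exact_mod_cast hN
  have hNs : (N : ℂ) ^ s ≠ 0 := by
    simp [Complex.cpow_eq_zero_iff, hN.ne']
  have ha : (r / N : ℝ) ∈ Icc (0 : ℝ) 1 := by
    constructor
    · positivity
    · rw [div_le_one hNR]
      exact_mod_cast hrN.le
  have h := hasSum_hurwitzZeta_of_one_lt_re ha hs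
  have hinj : Function.Injective (fun j : ℕ ↦ N * j + r) := fun a b hab => by
    simp only at hab
    exact Nat.eq_of_mul_eq_mul_left hN (by omega)
  refine (Function.Injective.hasSum_iff hinj ?_).mp ?_
  · intro x hx
    rw [if_neg]
    intro hmod
    exact hx ⟨x / N, by rw [← hmod]; exact Nat.div_add_mod x N⟩
  · convert h using 1
    ext j
    simp only [Function.comp_apply]
    rw [if_pos (by rw [Nat.mul_add_mod, Nat.mod_eq_of_lt hrN])]
    have hYne : (((j : ℝ) + r / N : ℝ) : ℂ) ^ s ≠ 0 := by
      rw [Ne, Complex.cpow_eq_zero_iff, Complex.ofReal_eq_zero]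
      intro ⟨h1, _⟩
      have : (0 : ℝ) < (j : ℝ) + r / N := by positivity
      linarith
    have hbase : (N : ℝ) * ((j : ℝ) + r / N) = ((N * j + r : ℕ) : ℝ) := by
      push_cast
      field_simp
    have key : (((N * j + r : ℕ)) : ℂ) ^ s = (N : ℂ) ^ s * (((j : ℝ) + r / N : ℝ) : ℂ) ^ s := by
      rw [← Complex.ofReal_natCast (N * j + r), ← hbase, Complex.ofReal_mul,
        mul_cpow_ofReal_nonneg hNR.le (by positivity), Complex.ofReal_natCast]
    have hform : ((j : ℂ) + ((r / N : ℝ) : ℂ)) = (((j : ℝ) + r / N : ℝ) : ℂ) := by push_cast; ring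
    rw [hform, key, one_div, mul_inv, ← mul_assoc, mul_inv_cancel₀ hNs, one_mul, one_div]

/-! ### Exponential helpers -/

lemma exp_add_exp_neg (θ : ℝ) :
    cexp ((θ : ℂ) * I) + cexp (-(θ : ℂ) * I) = 2 * (Real.cos θ : ℂ) := by
  rw [Complex.exp_mul_I, Complex.exp_mul_I, Complex.cos_neg, Complex.sin_neg,
    Complex.ofReal_cos]
  ring

lemma exp_eq_of_sub (z w : ℂ) (m : ℤ) (h : z = w + m * (2 * π * I)) : cexp z = cexp w := by
  rw [h, Complex.exp_add, Complex.exp_int_mul_two_pi_mul_I, mul_one]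

lemma cpow_one_sub (x : ℂ) (hx : x ≠ 0) (s : ℂ) : x ^ (1 - s) = x / x ^ s := by
  rw [show (1 : ℂ) - s = 1 + -s by ring, Complex.cpow_add _ _ hx, Complex.cpow_one,
    Complex.cpow_neg, div_eq_mul_inv]

lemma two_cpow_ne {s : ℂ} : (2 : ℂ) ^ s ≠ 0 := by
  simp [Complex.cpow_eq_zero_iff]

lemma three_cpow_ne {s : ℂ} : (3 : ℂ) ^ s ≠ 0 := by
  simp [Complex.cpow_eq_zero_iff]

lemma six_cpow_eq {s : ℂ} : (6 : ℂ) ^ s = (2 : ℂ) ^ s * (3 : ℂ) ^ s := by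
  have := Complex.natCast_mul_natCast_cpow 2 3 s
  push_cast at this
  norm_num at this
  exact this

lemma four_cpow_eq {s : ℂ} : (4 : ℂ) ^ s = (2 : ℂ) ^ s * (2 : ℂ) ^ s := by
  have := Complex.natCast_mul_natCast_cpow 2 2 s
  push_cast at this
  norm_num at this
  exact this

/-! ### Analytic continuation -/

lemma Q_identity_extend (a : ℝ) (g : ℂ → ℂ) (hg : Differentiable ℂ g)
    (h : ∀ s : ℂ, 1 < s.re → 2 * Q a s = g s * riemannZeta s) :
    ∀ s : ℂ, s ≠ 1 → 2 * Q a s = g s * riemannZeta s := by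
  have hU : IsOpen ({(1 : ℂ)}ᶜ : Set ℂ) := isOpen_compl_singleton
  have hQd : ∀ s : ℂ, s ≠ 1 → DifferentiableAt ℂ (fun z ↦ 2 * Q a z) s := by
    intro s hs1
    apply DifferentiableAt.const_mul
    unfold Q
    apply DifferentiableAt.div_const
    exact ((((differentiableAt_hurwitzZeta _ hs1).add
      (differentiableAt_hurwitzZeta _ hs1)).add
      (differentiableAt_expZeta _ _ (Or.inl hs1))).add
      (differentiableAt_expZeta _ _ (Or.inl hs1)))
  have h1 : AnalyticOnNhd ℂ (fun z ↦ 2 * Q a z) ({(1 : ℂ)}ᶜ : Set ℂ) :=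
    DifferentiableOn.analyticOnNhd
      (fun z hz ↦ (hQd z hz).differentiableWithinAt) hU
  have h2 : AnalyticOnNhd ℂ (fun z ↦ g z * riemannZeta z) ({(1 : ℂ)}ᶜ : Set ℂ) :=
    DifferentiableOn.analyticOnNhd
      (fun z hz ↦ ((hg z).mul (differentiableAt_riemannZeta hz)).differentiableWithinAt) hU
  have hconn : IsPreconnected ({(1 : ℂ)}ᶜ : Set ℂ) :=
    (isConnected_compl_singleton_of_one_lt_rank (by simp) _).isPreconnected
  have h2mem : (2 : ℂ) ∈ ({(1 : ℂ)}ᶜ : Set ℂ) := by norm_num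
  have hev : (fun z ↦ 2 * Q a z) =ᶠ[nhds (2 : ℂ)] (fun z ↦ g z * riemannZeta z) := by
    have hopen : IsOpen {z : ℂ | 1 < z.re} := isOpen_lt continuous_const Complex.continuous_re
    have hmem : {z : ℂ | 1 < z.re} ∈ nhds (2 : ℂ) := hopen.mem_nhds (by norm_num)
    filter_upwards [hmem] with z hz
    exact h z hz
  intro s hs
  exact h1.eqOn_of_preconnected_of_eventuallyEq h2 hconn h2mem hev hs

/-! ### Series identities for the four special values -/


lemma Q_half_series {s : ℂ} (hs : 1 < s.re) :
    2 * Q (1 / 2) s = (2 * (((2:ℂ) ^ s - 1) + ((2:ℂ) ^ (1 - s) - 1))) * riemannZeta s := by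
  have hA := hasSum_res hs (N := 2) (r := 1) (by norm_num) (by norm_num)
  have hC := hasSum_expZeta_of_one_lt_re (1 / 2 : ℝ) hs
  have h1 := hasSum_dvd hs (d := 1) (by norm_num)
  have h2 := hasSum_dvd hs (d := 2) (by norm_num)
  have hL := ((hA.add hA).add hC).add hC
  have hR := (((h1.sub h2).mul_left ((2 : ℂ) ^ s)).mul_left 2).add (((h2.mul_left 2).sub h1).mul_left 2)
  have hfun : (fun n : ℕ ↦
      ((((if n % 2 = 1 then ((2:ℕ) : ℂ) ^ s * (1 / (n : ℂ) ^ s) else 0)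
        + (if n % 2 = 1 then ((2:ℕ) : ℂ) ^ s * (1 / (n : ℂ) ^ s) else 0))
        + cexp (2 * (π : ℂ) * I * ((1 / 2 : ℝ) : ℂ) * (n : ℂ)) / (n : ℂ) ^ s)
        + cexp (2 * (π : ℂ) * I * ((1 / 2 : ℝ) : ℂ) * (n : ℂ)) / (n : ℂ) ^ s))
      = (fun n : ℕ ↦
      (2 * (((2:ℂ) ^ s) * ((if 1 ∣ n then 1 / (n : ℂ) ^ s else 0) - (if 2 ∣ n then 1 / (n : ℂ) ^ s else 0)))
      + 2 * (2 * (if 2 ∣ n then 1 / (n : ℂ) ^ s else 0) - (if 1 ∣ n then 1 / (n : ℂ) ^ s else 0)))) := by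
    funext n
    have hk : n % 2 < 2 := Nat.mod_lt _ (by norm_num)
    have hks : n % 2 = 0 ∨ n % 2 = 1 := by omega
    rcases hks with hk0 | hk1
    · -- k = 0
      obtain ⟨q, hq⟩ : ∃ q, n = 2 * q + 0 := ⟨n / 2, by omega⟩
      have hn : (n : ℂ) = 2 * (q : ℂ) + 0 := by exact_mod_cast hq
      have e1 : cexp (2 * (π : ℂ) * I * ((1 / 2 : ℝ) : ℂ) * (n : ℂ))
          = cexp (((2 * π * (0/2) : ℝ) : ℂ) * I) :=
        exp_eq_of_sub _ _ (q : ℤ) (by rw [hn]; push_cast; ring)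
      have hv : cexp (((2 * π * (0/2) : ℝ) : ℂ) * I) = 1 := by
        rw [show (2 * π * (0/2) : ℝ) = 0 by norm_num]
        simp
      rw [if_neg (show ¬ n % 2 = 1 by omega),
        if_pos (one_dvd n),
        if_pos (show 2 ∣ n by omega),
        e1]
      linear_combination (2 / (n : ℂ) ^ s) * hv
    · -- k = 1
      obtain ⟨q, hq⟩ : ∃ q, n = 2 * q + 1 := ⟨n / 2, by omega⟩
      have hn : (n : ℂ) = 2 * (q : ℂ) + 1 := by exact_mod_cast hq
      have e1 : cexp (2 * (π : ℂ) * I * ((1 / 2 : ℝ) : ℂ) * (n : ℂ))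
          = cexp (((2 * π * (1/2) : ℝ) : ℂ) * I) :=
        exp_eq_of_sub _ _ (q : ℤ) (by rw [hn]; push_cast; ring)
      have hv : cexp (((2 * π * (1/2) : ℝ) : ℂ) * I) = -1 := by
        rw [show (2 * π * (1/2) : ℝ) = π by ring]
        exact Complex.exp_pi_mul_I
      rw [if_pos (show n % 2 = 1 by omega),
        if_pos (one_dvd n),
        if_neg (show ¬ 2 ∣ n by omega),
        e1]
      linear_combination (2 / (n : ℂ) ^ s) * hv
  rw [hfun] at hL
  have hval := hL.unique hR
  push_cast at hval
  have hQ2 : 2 * Q (1 / 2 : ℝ) s = hurwitzZeta ((1/2 : ℝ) : UnitAddCircle) s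
      + hurwitzZeta ((1/2 : ℝ) : UnitAddCircle) s + expZeta ((1/2 : ℝ) : UnitAddCircle) s
      + expZeta ((1/2 : ℝ) : UnitAddCircle) s := by
    simp only [Q]
    rw [show (1 - (1/2) : ℝ) = 1/2 by norm_num]
    ring
  rw [hQ2, hval, cpow_one_sub (2 : ℂ) (by norm_num) s, one_cpow]
  field_simp

lemma Q_third_series {s : ℂ} (hs : 1 < s.re) :
    2 * Q (1 / 3) s = (((3:ℂ) ^ s - 1) + ((3:ℂ) ^ (1 - s) - 1)) * riemannZeta s := by
  have hA := hasSum_res hs (N := 3) (r := 1) (by norm_num) (by norm_num)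
  have hB := hasSum_res hs (N := 3) (r := 2) (by norm_num) (by norm_num)
  have hC := hasSum_expZeta_of_one_lt_re (1 / 3 : ℝ) hs
  have hD := hasSum_expZeta_of_one_lt_re (2 / 3 : ℝ) hs
  have h1 := hasSum_dvd hs (d := 1) (by norm_num)
  have h3 := hasSum_dvd hs (d := 3) (by norm_num)
  have hL := ((hA.add hB).add hC).add hD
  have hR := ((h1.sub h3).mul_left ((3 : ℂ) ^ s)).add ((h3.mul_left 3).sub h1)
  have hfun : (fun n : ℕ ↦
      ((((if n % 3 = 1 then ((3:ℕ) : ℂ) ^ s * (1 / (n : ℂ) ^ s) else 0)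
        + (if n % 3 = 2 then ((3:ℕ) : ℂ) ^ s * (1 / (n : ℂ) ^ s) else 0))
        + cexp (2 * (π : ℂ) * I * ((1 / 3 : ℝ) : ℂ) * (n : ℂ)) / (n : ℂ) ^ s)
        + cexp (2 * (π : ℂ) * I * ((2 / 3 : ℝ) : ℂ) * (n : ℂ)) / (n : ℂ) ^ s))
      = (fun n : ℕ ↦
      (((3:ℂ) ^ s) * ((if 1 ∣ n then 1 / (n : ℂ) ^ s else 0) - (if 3 ∣ n then 1 / (n : ℂ) ^ s else 0))
      + (3 * (if 3 ∣ n then 1 / (n : ℂ) ^ s else 0) - (if 1 ∣ n then 1 / (n : ℂ) ^ s else 0)))) := by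
    funext n
    have hk : n % 3 < 3 := Nat.mod_lt _ (by norm_num)
    have hks : n % 3 = 0 ∨ n % 3 = 1 ∨ n % 3 = 2 := by omega
    rcases hks with hk0 | hk1 | hk2
    · -- k = 0
      obtain ⟨q, hq⟩ : ∃ q, n = 3 * q + 0 := ⟨n / 3, by omega⟩
      have hn : (n : ℂ) = 3 * (q : ℂ) + 0 := by exact_mod_cast hq
      have e1 : cexp (2 * (π : ℂ) * I * ((1 / 3 : ℝ) : ℂ) * (n : ℂ))
          = cexp (((2 * π * (0/3) : ℝ) : ℂ) * I) :=
        exp_eq_of_sub _ _ (q : ℤ) (by rw [hn]; push_cast; ring)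
      have e2 : cexp (2 * (π : ℂ) * I * ((2 / 3 : ℝ) : ℂ) * (n : ℂ))
          = cexp (-((2 * π * (0/3) : ℝ) : ℂ) * I) :=
        exp_eq_of_sub _ _ (2 * (q : ℤ) + 0) (by rw [hn]; push_cast; ring)
      have hcos : Real.cos (2 * π * (0/3)) = 1 := by
        rw [show (2 * π * (0/3) : ℝ) = 0 by norm_num, Real.cos_zero]
      have hCD := exp_add_exp_neg (2 * π * (0/3))
      rw [hcos] at hCD
      rw [if_neg (show ¬ n % 3 = 1 by omega),
        if_neg (show ¬ n % 3 = 2 by omega),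
        if_pos (one_dvd n),
        if_pos (show 3 ∣ n by omega),
        e1,
        e2]
      have hvv : (2 : ℂ) * ((1 : ℝ) : ℂ) = 2 := by norm_num
      linear_combination (1 / (n : ℂ) ^ s) * hCD + (1 / (n : ℂ) ^ s) * hvv
    · -- k = 1
      obtain ⟨q, hq⟩ : ∃ q, n = 3 * q + 1 := ⟨n / 3, by omega⟩
      have hn : (n : ℂ) = 3 * (q : ℂ) + 1 := by exact_mod_cast hq
      have e1 : cexp (2 * (π : ℂ) * I * ((1 / 3 : ℝ) : ℂ) * (n : ℂ))
          = cexp (((2 * π * (1/3) : ℝ) : ℂ) * I) :=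
        exp_eq_of_sub _ _ (q : ℤ) (by rw [hn]; push_cast; ring)
      have e2 : cexp (2 * (π : ℂ) * I * ((2 / 3 : ℝ) : ℂ) * (n : ℂ))
          = cexp (-((2 * π * (1/3) : ℝ) : ℂ) * I) :=
        exp_eq_of_sub _ _ (2 * (q : ℤ) + 1) (by rw [hn]; push_cast; ring)
      have hcos : Real.cos (2 * π * (1/3)) = -(1/2) := by
        rw [show (2 * π * (1/3) : ℝ) = π - π/3 by ring, Real.cos_pi_sub, Real.cos_pi_div_three]
      have hCD := exp_add_exp_neg (2 * π * (1/3))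
      rw [hcos] at hCD
      rw [if_pos (show n % 3 = 1 by omega),
        if_neg (show ¬ n % 3 = 2 by omega),
        if_pos (one_dvd n),
        if_neg (show ¬ 3 ∣ n by omega),
        e1,
        e2]
      have hvv : (2 : ℂ) * ((-(1/2) : ℝ) : ℂ) = -1 := by norm_num
      linear_combination (1 / (n : ℂ) ^ s) * hCD + (1 / (n : ℂ) ^ s) * hvv
    · -- k = 2
      obtain ⟨q, hq⟩ : ∃ q, n = 3 * q + 2 := ⟨n / 3, by omega⟩
      have hn : (n : ℂ) = 3 * (q : ℂ) + 2 := by exact_mod_cast hq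
      have e1 : cexp (2 * (π : ℂ) * I * ((1 / 3 : ℝ) : ℂ) * (n : ℂ))
          = cexp (((2 * π * (2/3) : ℝ) : ℂ) * I) :=
        exp_eq_of_sub _ _ (q : ℤ) (by rw [hn]; push_cast; ring)
      have e2 : cexp (2 * (π : ℂ) * I * ((2 / 3 : ℝ) : ℂ) * (n : ℂ))
          = cexp (-((2 * π * (2/3) : ℝ) : ℂ) * I) :=
        exp_eq_of_sub _ _ (2 * (q : ℤ) + 2) (by rw [hn]; push_cast; ring)
      have hcos : Real.cos (2 * π * (2/3)) = -(1/2) := by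
        rw [show (2 * π * (2/3) : ℝ) = 2*π - (π - π/3) by ring, Real.cos_two_pi_sub, Real.cos_pi_sub, Real.cos_pi_div_three]
      have hCD := exp_add_exp_neg (2 * π * (2/3))
      rw [hcos] at hCD
      rw [if_neg (show ¬ n % 3 = 1 by omega),
        if_pos (show n % 3 = 2 by omega),
        if_pos (one_dvd n),
        if_neg (show ¬ 3 ∣ n by omega),
        e1,
        e2]
      have hvv : (2 : ℂ) * ((-(1/2) : ℝ) : ℂ) = -1 := by norm_num
      linear_combination (1 / (n : ℂ) ^ s) * hCD + (1 / (n : ℂ) ^ s) * hvv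
  rw [hfun] at hL
  have hval := hL.unique hR
  push_cast at hval
  have hQ2 : 2 * Q (1 / 3 : ℝ) s = hurwitzZeta ((1/3 : ℝ) : UnitAddCircle) s
      + hurwitzZeta ((2/3 : ℝ) : UnitAddCircle) s + expZeta ((1/3 : ℝ) : UnitAddCircle) s
      + expZeta ((2/3 : ℝ) : UnitAddCircle) s := by
    simp only [Q]
    rw [show (1 - (1/3) : ℝ) = 2/3 by norm_num]
    ring
  rw [hQ2, hval, cpow_one_sub (3 : ℂ) (by norm_num) s, one_cpow]
  field_simp

lemma Q_quarter_series {s : ℂ} (hs : 1 < s.re) :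
    2 * Q (1 / 4) s = ((2:ℂ) ^ s * ((2:ℂ) ^ s - 1) + (2:ℂ) ^ (1 - s) * ((2:ℂ) ^ (1 - s) - 1)) * riemannZeta s := by
  have hA := hasSum_res hs (N := 4) (r := 1) (by norm_num) (by norm_num)
  have hB := hasSum_res hs (N := 4) (r := 3) (by norm_num) (by norm_num)
  have hC := hasSum_expZeta_of_one_lt_re (1 / 4 : ℝ) hs
  have hD := hasSum_expZeta_of_one_lt_re (3 / 4 : ℝ) hs
  have h1 := hasSum_dvd hs (d := 1) (by norm_num)
  have h2 := hasSum_dvd hs (d := 2) (by norm_num)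
  have h4 := hasSum_dvd hs (d := 4) (by norm_num)
  have hL := ((hA.add hB).add hC).add hD
  have hR := ((h1.sub h2).mul_left ((4 : ℂ) ^ s)).add ((h4.mul_left 4).sub (h2.mul_left 2))
  have hfun : (fun n : ℕ ↦
      ((((if n % 4 = 1 then ((4:ℕ) : ℂ) ^ s * (1 / (n : ℂ) ^ s) else 0)
        + (if n % 4 = 3 then ((4:ℕ) : ℂ) ^ s * (1 / (n : ℂ) ^ s) else 0))
        + cexp (2 * (π : ℂ) * I * ((1 / 4 : ℝ) : ℂ) * (n : ℂ)) / (n : ℂ) ^ s)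
        + cexp (2 * (π : ℂ) * I * ((3 / 4 : ℝ) : ℂ) * (n : ℂ)) / (n : ℂ) ^ s))
      = (fun n : ℕ ↦
      (((4:ℂ) ^ s) * ((if 1 ∣ n then 1 / (n : ℂ) ^ s else 0) - (if 2 ∣ n then 1 / (n : ℂ) ^ s else 0))
      + (4 * (if 4 ∣ n then 1 / (n : ℂ) ^ s else 0) - 2 * (if 2 ∣ n then 1 / (n : ℂ) ^ s else 0)))) := by
    funext n
    have hk : n % 4 < 4 := Nat.mod_lt _ (by norm_num)
    have hks : n % 4 = 0 ∨ n % 4 = 1 ∨ n % 4 = 2 ∨ n % 4 = 3 := by omega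
    rcases hks with hk0 | hk1 | hk2 | hk3
    · -- k = 0
      obtain ⟨q, hq⟩ : ∃ q, n = 4 * q + 0 := ⟨n / 4, by omega⟩
      have hn : (n : ℂ) = 4 * (q : ℂ) + 0 := by exact_mod_cast hq
      have e1 : cexp (2 * (π : ℂ) * I * ((1 / 4 : ℝ) : ℂ) * (n : ℂ))
          = cexp (((2 * π * (0/4) : ℝ) : ℂ) * I) :=
        exp_eq_of_sub _ _ (q : ℤ) (by rw [hn]; push_cast; ring)
      have e2 : cexp (2 * (π : ℂ) * I * ((3 / 4 : ℝ) : ℂ) * (n : ℂ))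
          = cexp (-((2 * π * (0/4) : ℝ) : ℂ) * I) :=
        exp_eq_of_sub _ _ (3 * (q : ℤ) + 0) (by rw [hn]; push_cast; ring)
      have hcos : Real.cos (2 * π * (0/4)) = 1 := by
        rw [show (2 * π * (0/4) : ℝ) = 0 by norm_num, Real.cos_zero]
      have hCD := exp_add_exp_neg (2 * π * (0/4))
      rw [hcos] at hCD
      rw [if_neg (show ¬ n % 4 = 1 by omega),
        if_neg (show ¬ n % 4 = 3 by omega),
        if_pos (one_dvd n),
        if_pos (show 2 ∣ n by omega),
        if_pos (show 4 ∣ n by omega),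
        e1,
        e2]
      have hvv : (2 : ℂ) * ((1 : ℝ) : ℂ) = 2 := by norm_num
      linear_combination (1 / (n : ℂ) ^ s) * hCD + (1 / (n : ℂ) ^ s) * hvv
    · -- k = 1
      obtain ⟨q, hq⟩ : ∃ q, n = 4 * q + 1 := ⟨n / 4, by omega⟩
      have hn : (n : ℂ) = 4 * (q : ℂ) + 1 := by exact_mod_cast hq
      have e1 : cexp (2 * (π : ℂ) * I * ((1 / 4 : ℝ) : ℂ) * (n : ℂ))
          = cexp (((2 * π * (1/4) : ℝ) : ℂ) * I) :=
        exp_eq_of_sub _ _ (q : ℤ) (by rw [hn]; push_cast; ring)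
      have e2 : cexp (2 * (π : ℂ) * I * ((3 / 4 : ℝ) : ℂ) * (n : ℂ))
          = cexp (-((2 * π * (1/4) : ℝ) : ℂ) * I) :=
        exp_eq_of_sub _ _ (3 * (q : ℤ) + 1) (by rw [hn]; push_cast; ring)
      have hcos : Real.cos (2 * π * (1/4)) = 0 := by
        rw [show (2 * π * (1/4) : ℝ) = π/2 by ring, Real.cos_pi_div_two]
      have hCD := exp_add_exp_neg (2 * π * (1/4))
      rw [hcos] at hCD
      rw [if_pos (show n % 4 = 1 by omega),
        if_neg (show ¬ n % 4 = 3 by omega),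
        if_pos (one_dvd n),
        if_neg (show ¬ 2 ∣ n by omega),
        if_neg (show ¬ 4 ∣ n by omega),
        e1,
        e2]
      have hvv : (2 : ℂ) * ((0 : ℝ) : ℂ) = 0 := by norm_num
      linear_combination (1 / (n : ℂ) ^ s) * hCD + (1 / (n : ℂ) ^ s) * hvv
    · -- k = 2
      obtain ⟨q, hq⟩ : ∃ q, n = 4 * q + 2 := ⟨n / 4, by omega⟩
      have hn : (n : ℂ) = 4 * (q : ℂ) + 2 := by exact_mod_cast hq
      have e1 : cexp (2 * (π : ℂ) * I * ((1 / 4 : ℝ) : ℂ) * (n : ℂ))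
          = cexp (((2 * π * (2/4) : ℝ) : ℂ) * I) :=
        exp_eq_of_sub _ _ (q : ℤ) (by rw [hn]; push_cast; ring)
      have e2 : cexp (2 * (π : ℂ) * I * ((3 / 4 : ℝ) : ℂ) * (n : ℂ))
          = cexp (-((2 * π * (2/4) : ℝ) : ℂ) * I) :=
        exp_eq_of_sub _ _ (3 * (q : ℤ) + 2) (by rw [hn]; push_cast; ring)
      have hcos : Real.cos (2 * π * (2/4)) = -1 := by
        rw [show (2 * π * (2/4) : ℝ) = π by ring, Real.cos_pi]
      have hCD := exp_add_exp_neg (2 * π * (2/4))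
      rw [hcos] at hCD
      rw [if_neg (show ¬ n % 4 = 1 by omega),
        if_neg (show ¬ n % 4 = 3 by omega),
        if_pos (one_dvd n),
        if_pos (show 2 ∣ n by omega),
        if_neg (show ¬ 4 ∣ n by omega),
        e1,
        e2]
      have hvv : (2 : ℂ) * ((-1 : ℝ) : ℂ) = -2 := by norm_num
      linear_combination (1 / (n : ℂ) ^ s) * hCD + (1 / (n : ℂ) ^ s) * hvv
    · -- k = 3
      obtain ⟨q, hq⟩ : ∃ q, n = 4 * q + 3 := ⟨n / 4, by omega⟩
      have hn : (n : ℂ) = 4 * (q : ℂ) + 3 := by exact_mod_cast hq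
      have e1 : cexp (2 * (π : ℂ) * I * ((1 / 4 : ℝ) : ℂ) * (n : ℂ))
          = cexp (((2 * π * (3/4) : ℝ) : ℂ) * I) :=
        exp_eq_of_sub _ _ (q : ℤ) (by rw [hn]; push_cast; ring)
      have e2 : cexp (2 * (π : ℂ) * I * ((3 / 4 : ℝ) : ℂ) * (n : ℂ))
          = cexp (-((2 * π * (3/4) : ℝ) : ℂ) * I) :=
        exp_eq_of_sub _ _ (3 * (q : ℤ) + 3) (by rw [hn]; push_cast; ring)
      have hcos : Real.cos (2 * π * (3/4)) = 0 := by
        rw [show (2 * π * (3/4) : ℝ) = 2*π - π/2 by ring, Real.cos_two_pi_sub, Real.cos_pi_div_two]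
      have hCD := exp_add_exp_neg (2 * π * (3/4))
      rw [hcos] at hCD
      rw [if_neg (show ¬ n % 4 = 1 by omega),
        if_pos (show n % 4 = 3 by omega),
        if_pos (one_dvd n),
        if_neg (show ¬ 2 ∣ n by omega),
        if_neg (show ¬ 4 ∣ n by omega),
        e1,
        e2]
      have hvv : (2 : ℂ) * ((0 : ℝ) : ℂ) = 0 := by norm_num
      linear_combination (1 / (n : ℂ) ^ s) * hCD + (1 / (n : ℂ) ^ s) * hvv
  rw [hfun] at hL
  have hval := hL.unique hR
  push_cast at hval
  have hQ2 : 2 * Q (1 / 4 : ℝ) s = hurwitzZeta ((1/4 : ℝ) : UnitAddCircle) s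
      + hurwitzZeta ((3/4 : ℝ) : UnitAddCircle) s + expZeta ((1/4 : ℝ) : UnitAddCircle) s
      + expZeta ((3/4 : ℝ) : UnitAddCircle) s := by
    simp only [Q]
    rw [show (1 - (1/4) : ℝ) = 3/4 by norm_num]
    ring
  rw [hQ2, hval, four_cpow_eq, cpow_one_sub (2 : ℂ) (by norm_num) s, one_cpow]
  field_simp
  ring

lemma Q_sixth_series {s : ℂ} (hs : 1 < s.re) :
    2 * Q (1 / 6) s = (((2:ℂ) ^ s - 1) * ((3:ℂ) ^ s - 1) + ((2:ℂ) ^ (1 - s) - 1) * ((3:ℂ) ^ (1 - s) - 1)) * riemannZeta s := by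
  have hA := hasSum_res hs (N := 6) (r := 1) (by norm_num) (by norm_num)
  have hB := hasSum_res hs (N := 6) (r := 5) (by norm_num) (by norm_num)
  have hC := hasSum_expZeta_of_one_lt_re (1 / 6 : ℝ) hs
  have hD := hasSum_expZeta_of_one_lt_re (5 / 6 : ℝ) hs
  have h1 := hasSum_dvd hs (d := 1) (by norm_num)
  have h2 := hasSum_dvd hs (d := 2) (by norm_num)
  have h3 := hasSum_dvd hs (d := 3) (by norm_num)
  have h6 := hasSum_dvd hs (d := 6) (by norm_num)
  have hL := ((hA.add hB).add hC).add hD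
  have hR := ((((h1.sub h2).sub h3).add h6).mul_left ((6 : ℂ) ^ s)).add ((((h1.sub (h2.mul_left 2)).sub (h3.mul_left 3)).add (h6.mul_left 6)))
  have hfun : (fun n : ℕ ↦
      ((((if n % 6 = 1 then ((6:ℕ) : ℂ) ^ s * (1 / (n : ℂ) ^ s) else 0)
        + (if n % 6 = 5 then ((6:ℕ) : ℂ) ^ s * (1 / (n : ℂ) ^ s) else 0))
        + cexp (2 * (π : ℂ) * I * ((1 / 6 : ℝ) : ℂ) * (n : ℂ)) / (n : ℂ) ^ s)
        + cexp (2 * (π : ℂ) * I * ((5 / 6 : ℝ) : ℂ) * (n : ℂ)) / (n : ℂ) ^ s))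
      = (fun n : ℕ ↦
      (((6:ℂ) ^ s) * (((if 1 ∣ n then 1 / (n : ℂ) ^ s else 0) - (if 2 ∣ n then 1 / (n : ℂ) ^ s else 0) - (if 3 ∣ n then 1 / (n : ℂ) ^ s else 0)) + (if 6 ∣ n then 1 / (n : ℂ) ^ s else 0))
      + (((if 1 ∣ n then 1 / (n : ℂ) ^ s else 0) - 2 * (if 2 ∣ n then 1 / (n : ℂ) ^ s else 0) - 3 * (if 3 ∣ n then 1 / (n : ℂ) ^ s else 0)) + 6 * (if 6 ∣ n then 1 / (n : ℂ) ^ s else 0)))) := by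
    funext n
    have hk : n % 6 < 6 := Nat.mod_lt _ (by norm_num)
    have hks : n % 6 = 0 ∨ n % 6 = 1 ∨ n % 6 = 2 ∨ n % 6 = 3 ∨ n % 6 = 4 ∨ n % 6 = 5 := by omega
    rcases hks with hk0 | hk1 | hk2 | hk3 | hk4 | hk5
    · -- k = 0
      obtain ⟨q, hq⟩ : ∃ q, n = 6 * q + 0 := ⟨n / 6, by omega⟩
      have hn : (n : ℂ) = 6 * (q : ℂ) + 0 := by exact_mod_cast hq
      have e1 : cexp (2 * (π : ℂ) * I * ((1 / 6 : ℝ) : ℂ) * (n : ℂ))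
          = cexp (((2 * π * (0/6) : ℝ) : ℂ) * I) :=
        exp_eq_of_sub _ _ (q : ℤ) (by rw [hn]; push_cast; ring)
      have e2 : cexp (2 * (π : ℂ) * I * ((5 / 6 : ℝ) : ℂ) * (n : ℂ))
          = cexp (-((2 * π * (0/6) : ℝ) : ℂ) * I) :=
        exp_eq_of_sub _ _ (5 * (q : ℤ) + 0) (by rw [hn]; push_cast; ring)
      have hcos : Real.cos (2 * π * (0/6)) = 1 := by
        rw [show (2 * π * (0/6) : ℝ) = 0 by norm_num, Real.cos_zero]
      have hCD := exp_add_exp_neg (2 * π * (0/6))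
      rw [hcos] at hCD
      rw [if_neg (show ¬ n % 6 = 1 by omega),
        if_neg (show ¬ n % 6 = 5 by omega),
        if_pos (one_dvd n),
        if_pos (show 2 ∣ n by omega),
        if_pos (show 3 ∣ n by omega),
        if_pos (show 6 ∣ n by omega),
        e1,
        e2]
      have hvv : (2 : ℂ) * ((1 : ℝ) : ℂ) = 2 := by norm_num
      linear_combination (1 / (n : ℂ) ^ s) * hCD + (1 / (n : ℂ) ^ s) * hvv
    · -- k = 1
      obtain ⟨q, hq⟩ : ∃ q, n = 6 * q + 1 := ⟨n / 6, by omega⟩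
      have hn : (n : ℂ) = 6 * (q : ℂ) + 1 := by exact_mod_cast hq
      have e1 : cexp (2 * (π : ℂ) * I * ((1 / 6 : ℝ) : ℂ) * (n : ℂ))
          = cexp (((2 * π * (1/6) : ℝ) : ℂ) * I) :=
        exp_eq_of_sub _ _ (q : ℤ) (by rw [hn]; push_cast; ring)
      have e2 : cexp (2 * (π : ℂ) * I * ((5 / 6 : ℝ) : ℂ) * (n : ℂ))
          = cexp (-((2 * π * (1/6) : ℝ) : ℂ) * I) :=
        exp_eq_of_sub _ _ (5 * (q : ℤ) + 1) (by rw [hn]; push_cast; ring)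
      have hcos : Real.cos (2 * π * (1/6)) = 1/2 := by
        rw [show (2 * π * (1/6) : ℝ) = π/3 by ring, Real.cos_pi_div_three]
      have hCD := exp_add_exp_neg (2 * π * (1/6))
      rw [hcos] at hCD
      rw [if_pos (show n % 6 = 1 by omega),
        if_neg (show ¬ n % 6 = 5 by omega),
        if_pos (one_dvd n),
        if_neg (show ¬ 2 ∣ n by omega),
        if_neg (show ¬ 3 ∣ n by omega),
        if_neg (show ¬ 6 ∣ n by omega),
        e1,
        e2]
      have hvv : (2 : ℂ) * ((1/2 : ℝ) : ℂ) = 1 := by norm_num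
      linear_combination (1 / (n : ℂ) ^ s) * hCD + (1 / (n : ℂ) ^ s) * hvv
    · -- k = 2
      obtain ⟨q, hq⟩ : ∃ q, n = 6 * q + 2 := ⟨n / 6, by omega⟩
      have hn : (n : ℂ) = 6 * (q : ℂ) + 2 := by exact_mod_cast hq
      have e1 : cexp (2 * (π : ℂ) * I * ((1 / 6 : ℝ) : ℂ) * (n : ℂ))
          = cexp (((2 * π * (2/6) : ℝ) : ℂ) * I) :=
        exp_eq_of_sub _ _ (q : ℤ) (by rw [hn]; push_cast; ring)
      have e2 : cexp (2 * (π : ℂ) * I * ((5 / 6 : ℝ) : ℂ) * (n : ℂ))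
          = cexp (-((2 * π * (2/6) : ℝ) : ℂ) * I) :=
        exp_eq_of_sub _ _ (5 * (q : ℤ) + 2) (by rw [hn]; push_cast; ring)
      have hcos : Real.cos (2 * π * (2/6)) = -(1/2) := by
        rw [show (2 * π * (2/6) : ℝ) = π - π/3 by ring, Real.cos_pi_sub, Real.cos_pi_div_three]
      have hCD := exp_add_exp_neg (2 * π * (2/6))
      rw [hcos] at hCD
      rw [if_neg (show ¬ n % 6 = 1 by omega),
        if_neg (show ¬ n % 6 = 5 by omega),
        if_pos (one_dvd n),
        if_pos (show 2 ∣ n by omega),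
        if_neg (show ¬ 3 ∣ n by omega),
        if_neg (show ¬ 6 ∣ n by omega),
        e1,
        e2]
      have hvv : (2 : ℂ) * ((-(1/2) : ℝ) : ℂ) = -1 := by norm_num
      linear_combination (1 / (n : ℂ) ^ s) * hCD + (1 / (n : ℂ) ^ s) * hvv
    · -- k = 3
      obtain ⟨q, hq⟩ : ∃ q, n = 6 * q + 3 := ⟨n / 6, by omega⟩
      have hn : (n : ℂ) = 6 * (q : ℂ) + 3 := by exact_mod_cast hq
      have e1 : cexp (2 * (π : ℂ) * I * ((1 / 6 : ℝ) : ℂ) * (n : ℂ))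
          = cexp (((2 * π * (3/6) : ℝ) : ℂ) * I) :=
        exp_eq_of_sub _ _ (q : ℤ) (by rw [hn]; push_cast; ring)
      have e2 : cexp (2 * (π : ℂ) * I * ((5 / 6 : ℝ) : ℂ) * (n : ℂ))
          = cexp (-((2 * π * (3/6) : ℝ) : ℂ) * I) :=
        exp_eq_of_sub _ _ (5 * (q : ℤ) + 3) (by rw [hn]; push_cast; ring)
      have hcos : Real.cos (2 * π * (3/6)) = -1 := by
        rw [show (2 * π * (3/6) : ℝ) = π by ring, Real.cos_pi]
      have hCD := exp_add_exp_neg (2 * π * (3/6))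
      rw [hcos] at hCD
      rw [if_neg (show ¬ n % 6 = 1 by omega),
        if_neg (show ¬ n % 6 = 5 by omega),
        if_pos (one_dvd n),
        if_neg (show ¬ 2 ∣ n by omega),
        if_pos (show 3 ∣ n by omega),
        if_neg (show ¬ 6 ∣ n by omega),
        e1,
        e2]
      have hvv : (2 : ℂ) * ((-1 : ℝ) : ℂ) = -2 := by norm_num
      linear_combination (1 / (n : ℂ) ^ s) * hCD + (1 / (n : ℂ) ^ s) * hvv
    · -- k = 4
      obtain ⟨q, hq⟩ : ∃ q, n = 6 * q + 4 := ⟨n / 6, by omega⟩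
      have hn : (n : ℂ) = 6 * (q : ℂ) + 4 := by exact_mod_cast hq
      have e1 : cexp (2 * (π : ℂ) * I * ((1 / 6 : ℝ) : ℂ) * (n : ℂ))
          = cexp (((2 * π * (4/6) : ℝ) : ℂ) * I) :=
        exp_eq_of_sub _ _ (q : ℤ) (by rw [hn]; push_cast; ring)
      have e2 : cexp (2 * (π : ℂ) * I * ((5 / 6 : ℝ) : ℂ) * (n : ℂ))
          = cexp (-((2 * π * (4/6) : ℝ) : ℂ) * I) :=
        exp_eq_of_sub _ _ (5 * (q : ℤ) + 4) (by rw [hn]; push_cast; ring)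
      have hcos : Real.cos (2 * π * (4/6)) = -(1/2) := by
        rw [show (2 * π * (4/6) : ℝ) = 2*π - (π - π/3) by ring, Real.cos_two_pi_sub, Real.cos_pi_sub, Real.cos_pi_div_three]
      have hCD := exp_add_exp_neg (2 * π * (4/6))
      rw [hcos] at hCD
      rw [if_neg (show ¬ n % 6 = 1 by omega),
        if_neg (show ¬ n % 6 = 5 by omega),
        if_pos (one_dvd n),
        if_pos (show 2 ∣ n by omega),
        if_neg (show ¬ 3 ∣ n by omega),
        if_neg (show ¬ 6 ∣ n by omega),
        e1,
        e2]
      have hvv : (2 : ℂ) * ((-(1/2) : ℝ) : ℂ) = -1 := by norm_num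
      linear_combination (1 / (n : ℂ) ^ s) * hCD + (1 / (n : ℂ) ^ s) * hvv
    · -- k = 5
      obtain ⟨q, hq⟩ : ∃ q, n = 6 * q + 5 := ⟨n / 6, by omega⟩
      have hn : (n : ℂ) = 6 * (q : ℂ) + 5 := by exact_mod_cast hq
      have e1 : cexp (2 * (π : ℂ) * I * ((1 / 6 : ℝ) : ℂ) * (n : ℂ))
          = cexp (((2 * π * (5/6) : ℝ) : ℂ) * I) :=
        exp_eq_of_sub _ _ (q : ℤ) (by rw [hn]; push_cast; ring)
      have e2 : cexp (2 * (π : ℂ) * I * ((5 / 6 : ℝ) : ℂ) * (n : ℂ))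
          = cexp (-((2 * π * (5/6) : ℝ) : ℂ) * I) :=
        exp_eq_of_sub _ _ (5 * (q : ℤ) + 5) (by rw [hn]; push_cast; ring)
      have hcos : Real.cos (2 * π * (5/6)) = 1/2 := by
        rw [show (2 * π * (5/6) : ℝ) = 2*π - π/3 by ring, Real.cos_two_pi_sub, Real.cos_pi_div_three]
      have hCD := exp_add_exp_neg (2 * π * (5/6))
      rw [hcos] at hCD
      rw [if_neg (show ¬ n % 6 = 1 by omega),
        if_pos (show n % 6 = 5 by omega),
        if_pos (one_dvd n),
        if_neg (show ¬ 2 ∣ n by omega),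
        if_neg (show ¬ 3 ∣ n by omega),
        if_neg (show ¬ 6 ∣ n by omega),
        e1,
        e2]
      have hvv : (2 : ℂ) * ((1/2 : ℝ) : ℂ) = 1 := by norm_num
      linear_combination (1 / (n : ℂ) ^ s) * hCD + (1 / (n : ℂ) ^ s) * hvv
  rw [hfun] at hL
  have hval := hL.unique hR
  push_cast at hval
  have hQ2 : 2 * Q (1 / 6 : ℝ) s = hurwitzZeta ((1/6 : ℝ) : UnitAddCircle) s
      + hurwitzZeta ((5/6 : ℝ) : UnitAddCircle) s + expZeta ((1/6 : ℝ) : UnitAddCircle) s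
      + expZeta ((5/6 : ℝ) : UnitAddCircle) s := by
    simp only [Q]
    rw [show (1 - (1/6) : ℝ) = 5/6 by norm_num]
    ring
  rw [hQ2, hval, six_cpow_eq, cpow_one_sub (2 : ℂ) (by norm_num) s,
    cpow_one_sub (3 : ℂ) (by norm_num) s, one_cpow]
  field_simp
  ring

/-! ### The elementary factors are nonzero off the critical line -/

lemma sum_factor_ne {b : ℝ} (hb : 1 < b) {s : ℂ} (h : s.re ≠ 1 / 2) :
    ((b : ℂ) ^ s - 1) + ((b : ℂ) ^ (1 - s) - 1) ≠ 0 := by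
  suffices H : ∀ t : ℂ, 1 / 2 < t.re → ((b : ℂ) ^ t - 1) + ((b : ℂ) ^ (1 - t) - 1) ≠ 0 by
    rcases h.lt_or_gt with hlt | hgt
    · intro h0
      refine H (1 - s) ?_ ?_
      · simp only [Complex.sub_re, Complex.one_re]; linarith
      · rw [sub_sub_cancel]; linear_combination h0
    · exact H s hgt
  intro t ht h0
  have h1 := abs_cpow_sub_one_lt hb ht
  have h2 : (b : ℂ) ^ t - 1 = -((b : ℂ) ^ (1 - t) - 1) := by linear_combination h0
  rw [h2, norm_neg] at h1
  exact lt_irrefl _ h1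

lemma quarter_factor_ne {s : ℂ} (h : s.re ≠ 1 / 2) :
    (2 : ℂ) ^ s * ((2 : ℂ) ^ s - 1) + (2 : ℂ) ^ (1 - s) * ((2 : ℂ) ^ (1 - s) - 1) ≠ 0 := by
  suffices H : ∀ t : ℂ, 1 / 2 < t.re →
      (2 : ℂ) ^ t * ((2 : ℂ) ^ t - 1) + (2 : ℂ) ^ (1 - t) * ((2 : ℂ) ^ (1 - t) - 1) ≠ 0 by
    rcases h.lt_or_gt with hlt | hgt
    · intro h0
      refine H (1 - s) ?_ ?_
      · simp only [Complex.sub_re, Complex.one_re]; linarith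
      · rw [sub_sub_cancel]; linear_combination h0
    · exact H s hgt
  intro t ht h0
  have h1 := abs_cpow_sub_one_lt (b := 2) (by norm_num) ht
  have h2 := abs_cpow_one_sub_lt (b := 2) (by norm_num) ht
  push_cast at h1 h2
  have hlt : ‖(2 : ℂ) ^ (1 - t) * ((2 : ℂ) ^ (1 - t) - 1)‖
      < ‖(2 : ℂ) ^ t * ((2 : ℂ) ^ t - 1)‖ := by
    rw [norm_mul, norm_mul]
    exact mul_lt_mul'' h2 h1 (norm_nonneg _) (norm_nonneg _)
  have heq : (2 : ℂ) ^ t * ((2 : ℂ) ^ t - 1) = -((2 : ℂ) ^ (1 - t) * ((2 : ℂ) ^ (1 - t) - 1)) := by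
    linear_combination h0
  rw [heq, norm_neg] at hlt
  exact lt_irrefl _ hlt

lemma sixth_factor_ne {s : ℂ} (h : s.re ≠ 1 / 2) :
    ((2 : ℂ) ^ s - 1) * ((3 : ℂ) ^ s - 1)
      + ((2 : ℂ) ^ (1 - s) - 1) * ((3 : ℂ) ^ (1 - s) - 1) ≠ 0 := by
  suffices H : ∀ t : ℂ, 1 / 2 < t.re →
      ((2 : ℂ) ^ t - 1) * ((3 : ℂ) ^ t - 1)
        + ((2 : ℂ) ^ (1 - t) - 1) * ((3 : ℂ) ^ (1 - t) - 1) ≠ 0 by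
    rcases h.lt_or_gt with hlt | hgt
    · intro h0
      refine H (1 - s) ?_ ?_
      · simp only [Complex.sub_re, Complex.one_re]; linarith
      · rw [sub_sub_cancel]; linear_combination h0
    · exact H s hgt
  intro t ht h0
  have h2 := abs_cpow_sub_one_lt (b := 2) (by norm_num) ht
  have h3 := abs_cpow_sub_one_lt (b := 3) (by norm_num) ht
  push_cast at h2 h3
  have hlt : ‖((2 : ℂ) ^ (1 - t) - 1) * ((3 : ℂ) ^ (1 - t) - 1)‖
      < ‖((2 : ℂ) ^ t - 1) * ((3 : ℂ) ^ t - 1)‖ := by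
    rw [norm_mul, norm_mul]
    exact mul_lt_mul'' h2 h3 (norm_nonneg _) (norm_nonneg _)
  have heq : ((2 : ℂ) ^ t - 1) * ((3 : ℂ) ^ t - 1)
      = -(((2 : ℂ) ^ (1 - t) - 1) * ((3 : ℂ) ^ (1 - t) - 1)) := by
    linear_combination h0
  rw [heq, norm_neg] at hlt
  exact lt_irrefl _ hlt

lemma half_factor_ne {s : ℂ} (h : s.re ≠ 1 / 2) :
    2 * (((2 : ℂ) ^ s - 1) + ((2 : ℂ) ^ (1 - s) - 1)) ≠ 0 := by
  apply mul_ne_zero (by norm_num)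
  have := sum_factor_ne (b := 2) (by norm_num) h
  push_cast at this
  exact this

lemma third_factor_ne {s : ℂ} (h : s.re ≠ 1 / 2) :
    ((3 : ℂ) ^ s - 1) + ((3 : ℂ) ^ (1 - s) - 1) ≠ 0 := by
  have := sum_factor_ne (b := 3) (by norm_num) h
  push_cast at this
  exact this

/-! ### Differentiability of the factors -/

lemma diff_cpow (c : ℂ) (hc : c ≠ 0) : Differentiable ℂ (fun z : ℂ ↦ c ^ z) :=
  Differentiable.const_cpow differentiable_id (Or.inl hc)

lemma diff_cpow' (c : ℂ) (hc : c ≠ 0) : Differentiable ℂ (fun z : ℂ ↦ c ^ (1 - z)) :=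
  Differentiable.const_cpow ((differentiable_const 1).sub differentiable_id) (Or.inl hc)

/-- Generic equivalence once the identity and the factor's zero locus are known. -/
lemma rh_iff_of_identity (a : ℝ) (g : ℂ → ℂ) (hg : Differentiable ℂ g)
    (hser : ∀ s : ℂ, 1 < s.re → 2 * Q a s = g s * riemannZeta s)
    (hfac : ∀ s : ℂ, s.re ≠ 1 / 2 → g s ≠ 0) :
    (∀ s : ℂ, riemannZeta s = 0 → s.im ≠ 0 → s.re = 1 / 2) ↔
      (∀ s : ℂ, Q a s = 0 → s.im ≠ 0 → s.re = 1 / 2) := by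
  have hiden := Q_identity_extend a g hg hser
  have him_ne_one : ∀ s : ℂ, s.im ≠ 0 → s ≠ 1 := by
    intro s h hs
    rw [hs] at h
    exact h Complex.one_im
  constructor
  · intro hRH s hQ him
    have h0 : g s * riemannZeta s = 0 := by
      rw [← hiden s (him_ne_one s him), hQ, mul_zero]
    rcases mul_eq_zero.mp h0 with hr | hz
    · by_contra hne
      exact hfac s hne hr
    · exact hRH s hz him
  · intro hQl s hz him
    apply hQl s ?_ him
    have h0 := hiden s (him_ne_one s him)
    rw [hz, mul_zero] at h0
    exact (mul_eq_zero.mp h0).resolve_left (by norm_num)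

end QAux

open QAux in
/-- For `a ∈ {1/6, 1/4, 1/3, 1/2}`, the Riemann hypothesis holds if and only if every non-real
zero of `Q(s,a)` lies on the critical line `Re s = 1/2`. -/
theorem riemann_hypothesis_iff_quadrilateral_zeros_on_critical_line (a : ℝ)
    (ha : a = 1 / 6 ∨ a = 1 / 4 ∨ a = 1 / 3 ∨ a = 1 / 2) :
    (∀ s : ℂ, riemannZeta s = 0 → s.im ≠ 0 → s.re = 1 / 2) ↔
      (∀ s : ℂ, Q a s = 0 → s.im ≠ 0 → s.re = 1 / 2) := by
  have d2 := diff_cpow 2 (by norm_num)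
  have d3 := diff_cpow 3 (by norm_num)
  have d2' := diff_cpow' 2 (by norm_num)
  have d3' := diff_cpow' 3 (by norm_num)
  have dc : ∀ c : ℂ, Differentiable ℂ (fun _ : ℂ ↦ c) := fun c ↦ differentiable_const c
  rcases ha with rfl | rfl | rfl | rfl
  · exact rh_iff_of_identity _ _
      (((d2.sub (dc 1)).mul (d3.sub (dc 1))).add ((d2'.sub (dc 1)).mul (d3'.sub (dc 1))))
      (fun s hs ↦ Q_sixth_series hs) (fun s hs ↦ sixth_factor_ne hs)
  · exact rh_iff_of_identity _ _
      ((d2.mul (d2.sub (dc 1))).add (d2'.mul (d2'.sub (dc 1))))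
      (fun s hs ↦ Q_quarter_series hs) (fun s hs ↦ quarter_factor_ne hs)
  · exact rh_iff_of_identity _ _
      ((d3.sub (dc 1)).add (d3'.sub (dc 1)))
      (fun s hs ↦ Q_third_series hs) (fun s hs ↦ third_factor_ne hs)
  · exact rh_iff_of_identity _ _
      ((dc 2).mul ((d2.sub (dc 1)).add (d2'.sub (dc 1))))
      (fun s hs ↦ Q_half_series hs) (fun s hs ↦ half_factor_ne hs)
end

section
/- For every σ ∈ (0,1) and every a ∈ (0,1/2), the partial derivative with respect to a of the quadrilateral zeta function at real argument σ is strictly negative: ∂Q(σ,a)/∂a < 0. -/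
open Complex Real Set HurwitzZeta

open Filter Topology

noncomputable section QAux
namespace QAux

/-- The real Hurwitz zeta sum `∑ (n+x)^(-r)`. -/
def RZ (r x : ℝ) : ℝ := ∑' n : ℕ, ((n : ℝ) + x) ^ (-r)

lemma natpos {x : ℝ} (hx : 0 < x) (n : ℕ) : 0 < (n : ℝ) + x := by
  have : (0:ℝ) ≤ (n : ℝ) := Nat.cast_nonneg n
  linarith

lemma summable_shift {x r : ℝ} (hx : 0 < x) (hr : 1 < r) :
    Summable (fun n : ℕ => ((n : ℝ) + x) ^ (-r)) := by
  rw [← summable_nat_add_iff 1]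
  have h0 : Summable (fun n : ℕ => ((n : ℝ) + 1) ^ (-r)) := by
    have h := (Real.summable_nat_rpow (p := -r)).mpr (by linarith)
    rw [← summable_nat_add_iff 1] at h
    simpa using h
  refine Summable.of_nonneg_of_le (fun n => Real.rpow_nonneg (natpos hx _).le _) (fun n => ?_) h0
  refine Real.rpow_le_rpow_of_nonpos (by positivity) (by push_cast; linarith) (by linarith)

lemma RZ_lt {r x y : ℝ} (hx : 0 < x) (hxy : x < y) (hr : 1 < r) : RZ r y < RZ r x := by
  refine Summable.tsum_lt_tsum_of_nonneg (i := 0)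
    (fun n => Real.rpow_nonneg (natpos (by linarith) n).le _)
    (fun n => Real.rpow_le_rpow_of_nonpos (natpos hx n) (by linarith) (by linarith)) ?_
    (summable_shift hx hr)
  simpa using Real.rpow_lt_rpow_of_neg (by simpa using hx) (by simpa using hxy) (by linarith)

/-- Euler–Maclaurin style term. -/
def u (b : ℝ) (s : ℂ) (n : ℕ) : ℂ :=
  (((n : ℝ) + b : ℝ) : ℂ) ^ (-s) +
    ((((n : ℝ) + 1 + b : ℝ) : ℂ) ^ (1 - s) - (((n : ℝ) + b : ℝ) : ℂ) ^ (1 - s)) / (s - 1)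

lemma hasDerivAt_coe_cpow {c : ℝ} {w : ℂ} {b : ℝ} (h : 0 < c + b) :
    HasDerivAt (fun b : ℝ => ((c + b : ℝ) : ℂ) ^ w) (w * ((c + b : ℝ) : ℂ) ^ (w - 1)) b := by
  have hmem : ((c : ℂ) + (b : ℂ)) ∈ Complex.slitPlane := by
    rw [show (c : ℂ) + (b : ℂ) = ((c + b : ℝ) : ℂ) by push_cast; ring]
    exact Complex.ofReal_mem_slitPlane.mpr h
  have h1 : HasDerivAt (fun z : ℂ => ((c : ℂ) + z) ^ w)
      (w * ((c : ℂ) + (b : ℂ)) ^ (w - 1) * 1) ((b : ℝ) : ℂ) :=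
    ((hasDerivAt_id _).const_add _).cpow_const hmem
  have h2 := h1.comp_ofReal
  have hfun : (fun y : ℝ => ((c : ℂ) + ((y : ℝ) : ℂ)) ^ w) = fun y : ℝ => ((c + y : ℝ) : ℂ) ^ w := by
    funext y; norm_cast
  rw [hfun] at h2
  convert h2 using 1
  push_cast; ring

/-- Complex MVT bound for `x^(-s) - (x+t)^(-s)`. -/
lemma norm_cpow_sub_cpow_le {x : ℝ} (hx : 1 ≤ x) {s : ℂ} (hs : 0 < s.re) {t : ℝ}
    (ht : t ∈ Icc (0 : ℝ) 1) :
    ‖((x : ℝ) : ℂ) ^ (-s) - ((x + t : ℝ) : ℂ) ^ (-s)‖ ≤ ‖s‖ * x ^ (-s.re - 1) := by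
  have hx0 : (0 : ℝ) < x := lt_of_lt_of_le one_pos hx
  have hk : ∀ v ∈ Icc (0 : ℝ) 1, HasDerivWithinAt (fun v : ℝ => ((x + v : ℝ) : ℂ) ^ (-s))
      ((-s) * ((x + v : ℝ) : ℂ) ^ (-s - 1)) (Icc (0 : ℝ) 1) v := by
    intro v hv
    have := hasDerivAt_coe_cpow (c := x) (w := -s) (b := v) (by linarith [hv.1])
    simpa using this.hasDerivWithinAt
  have hbd : ∀ v ∈ Icc (0 : ℝ) 1, ‖(-s) * ((x + v : ℝ) : ℂ) ^ (-s - 1)‖ ≤ ‖s‖ * x ^ (-s.re - 1) := by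
    intro v hv
    rw [norm_mul, norm_neg]
    refine mul_le_mul_of_nonneg_left ?_ (norm_nonneg s)
    rw [Complex.norm_cpow_eq_rpow_re_of_pos (by linarith [hv.1])]
    have : (-s - 1).re = -s.re - 1 := by simp
    rw [this]
    exact Real.rpow_le_rpow_of_nonpos hx0 (by linarith [hv.1]) (by linarith)
  have := Convex.norm_image_sub_le_of_norm_hasDerivWithin_le hk hbd (convex_Icc 0 1)
    (left_mem_Icc.mpr one_pos.le) ht
  calc ‖((x : ℝ) : ℂ) ^ (-s) - ((x + t : ℝ) : ℂ) ^ (-s)‖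
      = ‖((x + t : ℝ) : ℂ) ^ (-s) - ((x + 0 : ℝ) : ℂ) ^ (-s)‖ := by
        rw [norm_sub_rev]; norm_num
    _ ≤ ‖s‖ * x ^ (-s.re - 1) * ‖t - 0‖ := this
    _ ≤ ‖s‖ * x ^ (-s.re - 1) * 1 := by
        refine mul_le_mul_of_nonneg_left ?_ (by positivity)
        rw [Real.norm_eq_abs, sub_zero]
        exact abs_le.mpr ⟨by linarith [ht.1], ht.2⟩
    _ = ‖s‖ * x ^ (-s.re - 1) := mul_one _

lemma norm_u_aux {x : ℝ} (hx1 : 1 ≤ x) {s : ℂ} (hs : 0 < s.re) (hs1 : s ≠ 1) :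
    ‖((x : ℝ) : ℂ) ^ (-s) + (((x + 1 : ℝ) : ℂ) ^ (1 - s) - ((x : ℝ) : ℂ) ^ (1 - s)) / (s - 1)‖
      ≤ ‖s‖ * x ^ (-s.re - 1) := by
  have hx0 : (0 : ℝ) < x := lt_of_lt_of_le one_pos hx1
  have hs1' : s - 1 ≠ 0 := sub_ne_zero.mpr hs1
  set h : ℝ → ℂ := fun t => t • ((x : ℝ) : ℂ) ^ (-s) +
    (((x + t : ℝ) : ℂ) ^ (1 - s) - ((x : ℝ) : ℂ) ^ (1 - s)) / (s - 1) with hhdef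
  have hueq : ((x : ℝ) : ℂ) ^ (-s) + (((x + 1 : ℝ) : ℂ) ^ (1 - s) - ((x : ℝ) : ℂ) ^ (1 - s)) / (s - 1)
      = h 1 - h 0 := by
    rw [hhdef]; norm_num
  have hderiv : ∀ t ∈ Icc (0 : ℝ) 1, HasDerivWithinAt h
      (((x : ℝ) : ℂ) ^ (-s) - ((x + t : ℝ) : ℂ) ^ (-s)) (Icc (0 : ℝ) 1) t := by
    intro t ht
    have h1 : HasDerivAt (fun t : ℝ => t • ((x : ℝ) : ℂ) ^ (-s)) (((x : ℝ) : ℂ) ^ (-s)) t := by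
      simpa using (hasDerivAt_id t).smul_const (((x : ℝ) : ℂ) ^ (-s))
    have h2 : HasDerivAt (fun t : ℝ => ((x + t : ℝ) : ℂ) ^ (1 - s))
        ((1 - s) * ((x + t : ℝ) : ℂ) ^ (-s)) t := by
      have := hasDerivAt_coe_cpow (c := x) (w := 1 - s) (b := t) (by linarith [ht.1])
      convert this using 2
      ring
    have h3 := h1.add (((h2.sub (hasDerivAt_const t (((x : ℝ) : ℂ) ^ (1 - s)))).div_const (s - 1)))
    have heq : ((x : ℝ) : ℂ) ^ (-s) + ((1 - s) * ((x + t : ℝ) : ℂ) ^ (-s) - 0) / (s - 1)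
        = ((x : ℝ) : ℂ) ^ (-s) - ((x + t : ℝ) : ℂ) ^ (-s) := by
      field_simp
      ring
    rw [heq] at h3
    exact h3.hasDerivWithinAt
  have hbd : ∀ t ∈ Icc (0 : ℝ) 1,
      ‖((x : ℝ) : ℂ) ^ (-s) - ((x + t : ℝ) : ℂ) ^ (-s)‖ ≤ ‖s‖ * x ^ (-s.re - 1) :=
    fun t ht => norm_cpow_sub_cpow_le hx1 hs ht
  have key := Convex.norm_image_sub_le_of_norm_hasDerivWithin_le hderiv hbd (convex_Icc 0 1)
    (left_mem_Icc.mpr one_pos.le) (right_mem_Icc.mpr one_pos.le)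
  rw [hueq]
  calc ‖h 1 - h 0‖ ≤ ‖s‖ * x ^ (-s.re - 1) * ‖(1 : ℝ) - 0‖ := key
    _ = ‖s‖ * x ^ (-s.re - 1) := by norm_num

lemma norm_u_le {b : ℝ} (hb : 0 < b) {s : ℂ} (hs : 0 < s.re) (hs1 : s ≠ 1) {n : ℕ} (hn : 1 ≤ n) :
    ‖u b s n‖ ≤ ‖s‖ * ((n : ℝ) + b) ^ (-s.re - 1) := by
  have hn1 : (1 : ℝ) ≤ (n : ℝ) := by exact_mod_cast hn
  have h := norm_u_aux (x := (n : ℝ) + b) (by linarith) hs hs1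
  rw [u, show (n : ℝ) + 1 + b = ((n : ℝ) + b) + 1 from by ring]
  exact h

lemma summable_norm_u {b : ℝ} (hb : 0 < b) {s : ℂ} (hs : 0 < s.re) (hs1 : s ≠ 1) :
    Summable (fun n : ℕ => ‖u b s n‖) := by
  rw [← summable_nat_add_iff 1]
  have hmaj : Summable (fun n : ℕ => ‖s‖ * (((n + 1 : ℕ) : ℝ) + b) ^ (-s.re - 1)) := by
    have h := (summable_shift hb (r := s.re + 1) (by linarith)).mul_left ‖s‖
    rw [← summable_nat_add_iff 1] at h
    refine h.congr fun n => ?_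
    rw [show -(s.re + 1) = -s.re - 1 from by ring]
  refine Summable.of_nonneg_of_le (fun n => norm_nonneg _) (fun n => ?_) hmaj
  exact norm_u_le hb hs hs1 (Nat.le_add_left 1 n)

lemma summable_u {b : ℝ} (hb : 0 < b) {s : ℂ} (hs : 0 < s.re) (hs1 : s ≠ 1) :
    Summable (u b s) :=
  (summable_norm_u hb hs hs1).of_norm

lemma summable_A {b : ℝ} (hb : 0 < b) {s : ℂ} (hs : 1 < s.re) :
    Summable (fun n : ℕ => ‖(((n : ℝ) + b : ℝ) : ℂ) ^ (-s)‖) := by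
  refine (summable_shift hb hs).congr fun n => ?_
  rw [Complex.norm_cpow_eq_rpow_re_of_pos (natpos hb n)]
  simp

lemma hasSum_u {b : ℝ} (hb : 0 < b) (hb1 : b ≤ 1) {s : ℂ} (hs : 1 < s.re) :
    HasSum (u b s) (hurwitzZeta (b : UnitAddCircle) s - (b : ℂ) ^ (1 - s) / (s - 1)) := by
  have hs0 : 0 < s.re := by linarith
  have hs1 : s ≠ 1 := fun h => by simp [h] at hs
  have hZ : HasSum (fun n : ℕ => (((n : ℝ) + b : ℝ) : ℂ) ^ (-s)) (hurwitzZeta (b : UnitAddCircle) s) := by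
    refine (hasSum_hurwitzZeta_of_one_lt_re ⟨hb.le, hb1⟩ hs).congr_fun fun n => ?_
    rw [Complex.cpow_neg, one_div]
    push_cast
    ring_nf
  set f : ℕ → ℂ := fun n => (((n : ℝ) + b : ℝ) : ℂ) ^ (1 - s) / (s - 1) with hf
  have hTu : ∀ n : ℕ, f n - f (n + 1) = (((n : ℝ) + b : ℝ) : ℂ) ^ (-s) - u b s n := by
    intro n
    rw [hf, u]
    push_cast
    ring
  have hTsummable : Summable (fun n : ℕ => ‖f n - f (n + 1)‖) := by
    refine Summable.of_nonneg_of_le (fun n => norm_nonneg _) (fun n => ?_)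
      ((summable_A hb hs).add (summable_norm_u hb hs0 hs1))
    rw [hTu n]
    exact norm_sub_le _ _
  have hflim : Tendsto (fun N : ℕ => f N) atTop (nhds 0) := by
    rw [tendsto_zero_iff_norm_tendsto_zero]
    have h1 : Tendsto (fun N : ℕ => ((N : ℝ) + b) ^ (1 - s.re) / ‖s - 1‖) atTop (nhds 0) := by
      have h2 : Tendsto (fun N : ℕ => (N : ℝ) + b) atTop atTop :=
        tendsto_atTop_add_const_right atTop b tendsto_natCast_atTop_atTop
      have h3 := (tendsto_rpow_neg_atTop (y := s.re - 1) (by linarith)).comp h2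
      have h4 : Tendsto (fun N : ℕ => ((N : ℝ) + b) ^ (1 - s.re)) atTop (nhds 0) := by
        refine h3.congr fun N => ?_
        rw [Function.comp_apply, show -(s.re - 1) = 1 - s.re from by ring]
      simpa using h4.div_const ‖s - 1‖
    refine h1.congr fun N => ?_
    rw [hf]
    simp only [norm_div]
    rw [Complex.norm_cpow_eq_rpow_re_of_pos (natpos hb N)]
    simp [Complex.sub_re, Complex.one_re]
  have hT : HasSum (fun n : ℕ => f n - f (n + 1)) ((b : ℂ) ^ (1 - s) / (s - 1)) := by
    refine (hasSum_iff_tendsto_nat_of_summable_norm hTsummable).mpr ?_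
    have hps : ∀ N : ℕ, ∑ n ∈ Finset.range N, (f n - f (n + 1)) = f 0 - f N :=
      fun N => Finset.sum_range_sub' f N
    have hf0 : f 0 = (b : ℂ) ^ (1 - s) / (s - 1) := by rw [hf]; norm_num
    rw [← hf0]
    refine Tendsto.congr (fun N => (hps N).symm) ?_
    simpa using tendsto_const_nhds.sub hflim
  have := hZ.sub hT
  refine this.congr_fun fun n => ?_
  rw [hTu n]
  ring

/-- The explicit continuation of the Hurwitz zeta function. -/
def Phi (b : ℝ) (s : ℂ) : ℂ :=
  (b : ℂ) ^ (1 - s) / (s - 1) + u b s 0 + ∑' n : ℕ, u b s (n + 1)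

lemma hurwitzZeta_eq_Phi_of_one_lt {b : ℝ} (hb : 0 < b) (hb1 : b ≤ 1) {s : ℂ} (hs : 1 < s.re) :
    hurwitzZeta (b : UnitAddCircle) s = Phi b s := by
  have h := hasSum_u hb hb1 hs
  have h1 : HasSum (fun n => u b s (n + 1))
      (hurwitzZeta (b : UnitAddCircle) s - (b : ℂ) ^ (1 - s) / (s - 1) - u b s 0) := by
    refine (hasSum_nat_add_iff 1).mpr ?_
    simpa [Finset.sum_range_one] using h
  rw [Phi, h1.tsum_eq]
  ring

lemma differentiableAt_u_term {x y : ℝ} (hx : 0 < x) (hy : 0 < y) {s₀ : ℂ} (hs : s₀ ≠ 1) :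
    DifferentiableAt ℂ
      (fun s : ℂ => ((x : ℝ) : ℂ) ^ (-s) + (((y : ℝ) : ℂ) ^ (1 - s) - ((x : ℝ) : ℂ) ^ (1 - s)) / (s - 1))
      s₀ := by
  have hx0 : ((x : ℝ) : ℂ) ≠ 0 := Complex.ofReal_ne_zero.mpr hx.ne'
  have hy0 : ((y : ℝ) : ℂ) ≠ 0 := Complex.ofReal_ne_zero.mpr hy.ne'
  have d1 : DifferentiableAt ℂ (fun s : ℂ => ((x : ℝ) : ℂ) ^ (-s)) s₀ :=
    (differentiable_neg.const_cpow (Or.inl hx0)).differentiableAt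
  have d2 : DifferentiableAt ℂ (fun s : ℂ => ((y : ℝ) : ℂ) ^ (1 - s)) s₀ :=
    (((differentiable_const (1:ℂ)).sub differentiable_id).const_cpow (Or.inl hy0)).differentiableAt
  have d3 : DifferentiableAt ℂ (fun s : ℂ => ((x : ℝ) : ℂ) ^ (1 - s)) s₀ :=
    (((differentiable_const (1:ℂ)).sub differentiable_id).const_cpow (Or.inl hx0)).differentiableAt
  exact d1.add (((d2.sub d3)).div (differentiableAt_id.sub (differentiableAt_const 1))
    (sub_ne_zero.mpr hs))

lemma differentiableAt_Phi {b : ℝ} (hb : 0 < b) {s₀ : ℂ} (h0 : 0 < s₀.re) (h1 : s₀ ≠ 1) :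
    DifferentiableAt ℂ (Phi b) s₀ := by
  set δ : ℝ := s₀.re / 2 with hδdef
  have hδ0 : 0 < δ := by positivity
  set r : ℝ := min δ (dist s₀ 1) with hrdef
  have hr0 : 0 < r := lt_min hδ0 (dist_pos.mpr h1)
  set B := Metric.ball s₀ r with hBdef
  have hBopen : IsOpen B := Metric.isOpen_ball
  have hmem : s₀ ∈ B := Metric.mem_ball_self hr0
  have hre : ∀ s ∈ B, δ < s.re := by
    intro s hs
    have h2 : dist s s₀ < r := Metric.mem_ball.mp hs
    have h3 : |(s - s₀).re| ≤ ‖s - s₀‖ := Complex.abs_re_le_norm _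
    rw [Complex.sub_re] at h3
    have h4 : ‖s - s₀‖ = dist s s₀ := (Complex.dist_eq s s₀).symm
    have h5 : r ≤ δ := min_le_left _ _
    have h6 := (abs_le.mp (h3.trans h4.le)).1
    have hδδ : s₀.re = 2 * δ := by rw [hδdef]; ring
    linarith
  have hne1 : ∀ s ∈ B, s ≠ 1 := by
    intro s hs heq
    subst heq
    have h2 : dist (1:ℂ) s₀ < r := Metric.mem_ball.mp hs
    rw [dist_comm] at h2
    exact absurd h2 (not_lt.mpr (min_le_right δ _))
  set M : ℝ := ‖s₀‖ + r with hMdef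
  have hM : ∀ s ∈ B, ‖s‖ ≤ M := by
    intro s hs
    have h2 : dist s s₀ < r := Metric.mem_ball.mp hs
    calc ‖s‖ ≤ ‖s₀‖ + ‖s - s₀‖ := by
          have := norm_add_le s₀ (s - s₀); simpa using this
      _ ≤ M := by rw [hMdef]; rw [← dist_eq_norm] at *; linarith
  have hM0 : 0 ≤ M := le_trans (norm_nonneg s₀) (by rw [hMdef]; linarith)
  have key : ∀ (n : ℕ), ∀ s ∈ B, ‖u b s (n + 1)‖ ≤ M * (((n:ℝ) + 1)) ^ (-δ - 1) := by
    intro n s hs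
    have hsre : 0 < s.re := lt_trans hδ0 (hre s hs)
    calc ‖u b s (n + 1)‖ ≤ ‖s‖ * (((n + 1 : ℕ) : ℝ) + b) ^ (-s.re - 1) :=
          norm_u_le hb hsre (hne1 s hs) (Nat.le_add_left 1 n)
      _ ≤ M * ((n:ℝ) + 1) ^ (-δ - 1) := by
          refine mul_le_mul (hM s hs) ?_ (Real.rpow_nonneg (by positivity) _) hM0
          calc (((n + 1 : ℕ) : ℝ) + b) ^ (-s.re - 1) ≤ ((n:ℝ) + 1) ^ (-s.re - 1) := by
                refine Real.rpow_le_rpow_of_nonpos (by positivity) (by push_cast; linarith) (by linarith)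
            _ ≤ ((n:ℝ) + 1) ^ (-δ - 1) := by
                refine Real.rpow_le_rpow_of_exponent_le (by norm_num [Nat.one_le_cast]) ?_
                linarith [hre s hs]
  have hsummM : Summable (fun n : ℕ => M * ((n:ℝ) + 1) ^ (-δ - 1)) := by
    have h := (summable_shift (x := 1) one_pos (r := δ + 1) (by linarith)).mul_left M
    refine h.congr fun n => ?_
    rw [show -(δ + 1) = -δ - 1 from by ring]
  have hdiff : DifferentiableOn ℂ (fun s => ∑' n : ℕ, u b s (n + 1)) B := by
    refine (tendstoUniformlyOn_tsum hsummM key).tendstoLocallyUniformlyOn.differentiableOn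
      (Filter.Eventually.of_forall fun t => ?_) hBopen
    refine DifferentiableOn.fun_sum fun n _ => ?_
    intro s hs
    have := differentiableAt_u_term (x := (n + 1 : ℕ) + b) (y := ((n + 1 : ℕ) : ℝ) + 1 + b)
      (natpos hb (n + 1)) (by have := natpos hb (n + 1); linarith) (hne1 s hs)
    refine DifferentiableAt.differentiableWithinAt ?_
    simpa [u] using this
  have hP : DifferentiableAt ℂ (fun s : ℂ => (b : ℂ) ^ (1 - s) / (s - 1)) s₀ := by
    have hb0 : ((b : ℝ) : ℂ) ≠ 0 := Complex.ofReal_ne_zero.mpr hb.ne'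
    exact ((((differentiable_const (1:ℂ)).sub differentiable_id).const_cpow
      (Or.inl hb0)).differentiableAt).div (differentiableAt_id.sub (differentiableAt_const 1))
      (sub_ne_zero.mpr h1)
  have hu0 : DifferentiableAt ℂ (fun s : ℂ => u b s 0) s₀ := by
    have := differentiableAt_u_term (x := (0:ℝ) + b) (y := (0:ℝ) + 1 + b)
      (by linarith) (by linarith) h1
    simpa [u] using this
  have htsum : DifferentiableAt ℂ (fun s => ∑' n : ℕ, u b s (n + 1)) s₀ :=
    hdiff.differentiableAt (hBopen.mem_nhds hmem)
  exact (hP.add hu0).add htsum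

lemma preconnected_omega : IsPreconnected {s : ℂ | 0 < s.re ∧ s ≠ 1} := by
  set P1 : Set ℂ := {z | 0 < z.re ∧ z.re < 1} with hP1
  set P2 : Set ℂ := {z | 0 < z.re ∧ 0 < z.im} with hP2
  set P3 : Set ℂ := {z | 0 < z.re ∧ z.im < 0} with hP3
  set P4 : Set ℂ := {z | 1 < z.re} with hP4
  have c1 : Convex ℝ P1 := (convex_halfSpace_re_gt 0).inter (convex_halfSpace_re_lt 1)
  have c2 : Convex ℝ P2 := (convex_halfSpace_re_gt 0).inter (convex_halfSpace_im_gt 0)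
  have c3 : Convex ℝ P3 := (convex_halfSpace_re_gt 0).inter (convex_halfSpace_im_lt 0)
  have c4 : Convex ℝ P4 := convex_halfSpace_re_gt 1
  have h12 : IsPreconnected (P1 ∪ P2) := by
    refine IsPreconnected.union ⟨1/2, 1/2⟩ ?_ ?_ c1.isPreconnected c2.isPreconnected
    · exact ⟨by norm_num, by norm_num⟩
    · exact ⟨by norm_num, by norm_num⟩
  have h123 : IsPreconnected (P1 ∪ P2 ∪ P3) := by
    refine IsPreconnected.union ⟨1/2, -(1/2)⟩ ?_ ?_ h12 c3.isPreconnected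
    · exact Or.inl ⟨by norm_num, by norm_num⟩
    · exact ⟨by norm_num, by norm_num⟩
  have hall : IsPreconnected (P1 ∪ P2 ∪ P3 ∪ P4) := by
    refine IsPreconnected.union ⟨2, 1⟩ ?_ ?_ h123 c4.isPreconnected
    · exact Or.inl (Or.inr ⟨by norm_num, by norm_num⟩)
    · exact (by norm_num : (1:ℝ) < 2)
  have heq : {s : ℂ | 0 < s.re ∧ s ≠ 1} = P1 ∪ P2 ∪ P3 ∪ P4 := by
    ext z
    constructor
    · rintro ⟨hz0, hz1⟩
      rcases lt_trichotomy z.re 1 with h | h | h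
      · exact Or.inl (Or.inl (Or.inl ⟨hz0, h⟩))
      · have him : z.im ≠ 0 := by
          intro h0
          exact hz1 (Complex.ext (by rw [h]; simp) (by rw [h0]; simp))
        rcases him.lt_or_gt with h' | h'
        · exact Or.inl (Or.inr ⟨hz0, h'⟩)
        · exact Or.inl (Or.inl (Or.inr ⟨hz0, h'⟩))
      · exact Or.inr h
    · rintro (((⟨h1, h2⟩ | ⟨h1, h2⟩) | ⟨h1, h2⟩) | h)
      · exact ⟨h1, fun he => by rw [he] at h2; simp at h2⟩
      · exact ⟨h1, fun he => by rw [he] at h2; simp at h2⟩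
      · exact ⟨h1, fun he => by rw [he] at h2; simp at h2⟩
      · have h' : 1 < z.re := h
        exact ⟨lt_trans zero_lt_one h', fun he => by rw [he] at h'; simp at h'⟩
  rw [heq]
  exact hall

lemma hurwitzZeta_eq_Phi {b : ℝ} (hb : 0 < b) (hb1 : b ≤ 1) {s : ℂ} (hs : 0 < s.re)
    (hs1 : s ≠ 1) : hurwitzZeta (b : UnitAddCircle) s = Phi b s := by
  set Ω : Set ℂ := {s : ℂ | 0 < s.re ∧ s ≠ 1} with hΩ
  have hΩopen : IsOpen Ω := by
    have : Ω = {s : ℂ | 0 < s.re} ∩ {(1:ℂ)}ᶜ := rfl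
    rw [this]
    exact (isOpen_lt continuous_const Complex.continuous_re).inter isOpen_compl_singleton
  have hAZ : AnalyticOnNhd ℂ (fun s => hurwitzZeta (b : UnitAddCircle) s) Ω :=
    DifferentiableOn.analyticOnNhd
      (fun s hsΩ => (differentiableAt_hurwitzZeta _ hsΩ.2).differentiableWithinAt) hΩopen
  have hAP : AnalyticOnNhd ℂ (Phi b) Ω :=
    DifferentiableOn.analyticOnNhd
      (fun s hsΩ => (differentiableAt_Phi hb hsΩ.1 hsΩ.2).differentiableWithinAt) hΩopen
  have h2 : (2 : ℂ) ∈ Ω := by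
    constructor
    · norm_num
    · intro h; norm_num at h
  have hev : (fun s => hurwitzZeta (b : UnitAddCircle) s) =ᶠ[nhds (2 : ℂ)] Phi b := by
    have hmem : {s : ℂ | 1 < s.re} ∈ nhds (2 : ℂ) :=
      (isOpen_lt continuous_const Complex.continuous_re).mem_nhds (by norm_num)
    filter_upwards [hmem] with s hs using hurwitzZeta_eq_Phi_of_one_lt hb hb1 hs
  exact hAZ.eqOn_of_preconnected_of_eventuallyEq hAP preconnected_omega h2 hev ⟨hs, hs1⟩

/-- Derivative of `u` with respect to `b`. -/
def u' (τ : ℝ) (n : ℕ) (b : ℝ) : ℂ :=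
  -(τ : ℂ) * (((n : ℝ) + b : ℝ) : ℂ) ^ (-(τ : ℂ) - 1) + (((n : ℝ) + b : ℝ) : ℂ) ^ (-(τ : ℂ)) -
    (((n : ℝ) + 1 + b : ℝ) : ℂ) ^ (-(τ : ℂ))

lemma hasDerivAt_u {τ : ℝ} (hτ : (τ : ℂ) ≠ 1) (n : ℕ) {b : ℝ} (hb : 0 < b) :
    HasDerivAt (fun b : ℝ => u b (τ : ℂ) n) (u' τ n b) b := by
  have hτ1 : (τ : ℂ) - 1 ≠ 0 := sub_ne_zero.mpr hτ
  have hpos : 0 < (n : ℝ) + b := natpos hb n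
  have hpos2 : 0 < ((n : ℝ) + 1) + b := by linarith
  have h1 := hasDerivAt_coe_cpow (c := (n : ℝ)) (w := -(τ:ℂ)) (b := b) hpos
  have h2 := hasDerivAt_coe_cpow (c := (n : ℝ) + 1) (w := 1 - (τ:ℂ)) (b := b) hpos2
  have h3 := hasDerivAt_coe_cpow (c := (n : ℝ)) (w := 1 - (τ:ℂ)) (b := b) hpos
  have h := h1.add ((h2.sub h3).div_const ((τ:ℂ) - 1))
  have hfun : (fun b : ℝ => (((n : ℝ) + b : ℝ) : ℂ) ^ (-(τ:ℂ)) +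
      (((((n : ℝ) + 1) + b : ℝ) : ℂ) ^ (1 - (τ:ℂ)) - (((n : ℝ) + b : ℝ) : ℂ) ^ (1 - (τ:ℂ))) /
        ((τ:ℂ) - 1)) = fun b : ℝ => u b (τ : ℂ) n := by
    funext y
    rw [u, show (n : ℝ) + 1 + y = ((n : ℝ) + 1) + y from by ring]
  rw [← hfun]
  refine h.congr_deriv ?_
  rw [u']
  rw [show (n : ℝ) + 1 + b = ((n : ℝ) + 1) + b from by ring]
  have e1 : (1 : ℂ) - (τ:ℂ) - 1 = -(τ:ℂ) := by ring
  rw [e1]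
  field_simp
  ring

/-- Real MVT bound: `z^(-τ) - (z+1)^(-τ) ≤ τ * z^(-τ-1)`. -/
lemma sub_rpow_le {τ z : ℝ} (hτ : 0 < τ) (hz : 0 < z) :
    z ^ (-τ) - (z + 1) ^ (-τ) ≤ τ * z ^ (-τ - 1) := by
  have hk : ∀ t ∈ Icc (0:ℝ) 1, HasDerivWithinAt (fun t : ℝ => (z + t) ^ (-τ))
      (-τ * (z + t) ^ (-τ - 1)) (Icc (0:ℝ) 1) t := by
    intro t ht
    have hzt : 0 < z + t := by linarith [ht.1]
    have hin : HasDerivAt (fun t : ℝ => z + t) 1 t := (hasDerivAt_id t).const_add z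
    have hout := Real.hasDerivAt_rpow_const (x := z + t) (p := -τ) (Or.inl hzt.ne')
    have := hout.comp t hin
    simpa [mul_comm, Function.comp_def] using this.hasDerivWithinAt
  have hbd : ∀ t ∈ Icc (0:ℝ) 1, ‖-τ * (z + t) ^ (-τ - 1)‖ ≤ τ * z ^ (-τ - 1) := by
    intro t ht
    have hzt : 0 < z + t := by linarith [ht.1]
    rw [Real.norm_eq_abs, abs_mul, abs_neg, abs_of_pos hτ,
      abs_of_pos (Real.rpow_pos_of_pos hzt _)]
    exact mul_le_mul_of_nonneg_left
      (Real.rpow_le_rpow_of_nonpos hz (by linarith [ht.1]) (by linarith)) hτ.le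
  have key := Convex.norm_image_sub_le_of_norm_hasDerivWithin_le hk hbd (convex_Icc 0 1)
    (left_mem_Icc.mpr one_pos.le) (right_mem_Icc.mpr one_pos.le)
  have h1 : |(z + 1) ^ (-τ) - (z + 0) ^ (-τ)| ≤ τ * z ^ (-τ - 1) * 1 := by
    simpa [Real.norm_eq_abs] using key
  rw [add_zero, mul_one] at h1
  have h2 := (abs_le.mp h1).1
  linarith

/-- Telescoping sum. -/
lemma hasSum_telescope_rpow {p x : ℝ} (hp : 0 < p) (hx : 0 < x) :
    HasSum (fun n : ℕ => ((n : ℝ) + x) ^ (-p) - ((n : ℝ) + 1 + x) ^ (-p)) (x ^ (-p)) := by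
  have hf : ∀ n : ℕ, 0 ≤ ((n : ℝ) + x) ^ (-p) - ((n : ℝ) + 1 + x) ^ (-p) := fun n =>
    sub_nonneg.mpr (Real.rpow_le_rpow_of_nonpos (natpos hx n) (by linarith) (by linarith))
  rw [hasSum_iff_tendsto_nat_of_nonneg hf]
  have hps : ∀ N : ℕ, ∑ n ∈ Finset.range N, (((n : ℝ) + x) ^ (-p) - ((n : ℝ) + 1 + x) ^ (-p))
      = x ^ (-p) - ((N : ℝ) + x) ^ (-p) := by
    intro N
    have h := Finset.sum_range_sub' (f := fun n : ℕ => ((n : ℝ) + x) ^ (-p)) N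
    have h2 : ∀ n ∈ Finset.range N, (((n : ℝ) + x) ^ (-p) - ((n : ℝ) + 1 + x) ^ (-p))
        = ((n : ℝ) + x) ^ (-p) - (((n + 1 : ℕ) : ℝ) + x) ^ (-p) := by
      intro n _; push_cast; ring_nf
    rw [Finset.sum_congr rfl h2, h]
    norm_num
  have hlim : Tendsto (fun N : ℕ => ((N : ℝ) + x) ^ (-p)) atTop (nhds 0) :=
    (tendsto_rpow_neg_atTop hp).comp
      (tendsto_atTop_add_const_right atTop x tendsto_natCast_atTop_atTop)
  refine Tendsto.congr (fun N => (hps N).symm) ?_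
  simpa using tendsto_const_nhds.sub hlim

/-- The main derivative lemma. -/
lemma hasDerivAt_hurwitzZeta {τ : ℝ} (hτ0 : 0 < τ) (hτ1 : τ < 1) {x : ℝ}
    (hx : x ∈ Ioo (0:ℝ) 1) :
    HasDerivAt (fun b : ℝ => hurwitzZeta (b : UnitAddCircle) (τ : ℂ))
      (((-τ * RZ (τ + 1) x : ℝ) : ℂ)) x := by
  obtain ⟨hx0, hx1⟩ := hx
  have hτC : (τ : ℂ) ≠ 1 := by
    intro h
    rw [show (1 : ℂ) = ((1 : ℝ) : ℂ) from by norm_num] at h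
    exact absurd (Complex.ofReal_inj.mp h) hτ1.ne
  have hτre : ((τ : ℂ)).re = τ := Complex.ofReal_re τ
  -- (a) pole term
  have hA : HasDerivAt (fun b : ℝ => (b : ℂ) ^ (1 - (τ:ℂ)) / ((τ:ℂ) - 1))
      (-(x : ℂ) ^ (-(τ:ℂ))) x := by
    have h0 := hasDerivAt_coe_cpow (c := (0:ℝ)) (w := 1 - (τ:ℂ)) (b := x) (by linarith)
    have hfun : (fun b : ℝ => (((0:ℝ) + b : ℝ) : ℂ) ^ (1 - (τ:ℂ))) =
        fun b : ℝ => (b : ℂ) ^ (1 - (τ:ℂ)) := by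
      funext y; norm_num
    rw [hfun] at h0
    have h1 := h0.div_const ((τ:ℂ) - 1)
    refine h1.congr_deriv ?_
    rw [show (0:ℝ) + x = x from by ring, show (1 : ℂ) - (τ:ℂ) - 1 = -(τ:ℂ) from by ring]
    have hτ1' : (τ:ℂ) - 1 ≠ 0 := sub_ne_zero.mpr hτC
    field_simp
    ring
  -- (b) u 0 term
  have hB : HasDerivAt (fun b : ℝ => u b (τ:ℂ) 0) (u' τ 0 x) x := hasDerivAt_u hτC 0 hx0
  -- (c) tsum term
  have hbnd_summ : Summable (fun n : ℕ => 2 * τ * ((n : ℝ) + 1) ^ (-τ - 1)) := by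
    have h := (summable_shift (x := 1) one_pos (r := τ + 1) (by linarith)).mul_left (2 * τ)
    refine h.congr fun n => ?_
    rw [show -(τ + 1) = -τ - 1 from by ring]
  have hbnd : ∀ (n : ℕ), ∀ y ∈ Ioo (0:ℝ) 1, ‖u' τ (n+1) y‖ ≤ 2 * τ * ((n:ℝ) + 1) ^ (-τ - 1) := by
    intro n y hy
    have hy0 := hy.1
    set z : ℝ := ((n + 1 : ℕ) : ℝ) + y with hzdef
    have hz : (0:ℝ) < z := natpos hy0 (n+1)
    have hmn : ((n:ℝ) + 1) ≤ z := by rw [hzdef]; push_cast; linarith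
    have hn1 : (0:ℝ) < (n:ℝ) + 1 := by positivity
    have hsplit : u' τ (n+1) y = (-(τ:ℂ) * ((z:ℝ):ℂ) ^ (-(τ:ℂ) - 1)) +
        (((z:ℝ):ℂ) ^ (-(τ:ℂ)) - (((z + 1 :ℝ)):ℂ) ^ (-(τ:ℂ))) := by
      rw [u', hzdef, show ((n+1:ℕ):ℝ) + 1 + y = (((n+1:ℕ):ℝ) + y) + 1 from by ring]
      ring
    rw [hsplit]
    have e1 : ‖-(τ:ℂ) * ((z:ℝ):ℂ) ^ (-(τ:ℂ) - 1)‖ ≤ τ * ((n:ℝ) + 1) ^ (-τ - 1) := by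
      rw [norm_mul, norm_neg, Complex.norm_real, Real.norm_eq_abs, abs_of_pos hτ0]
      refine mul_le_mul_of_nonneg_left ?_ hτ0.le
      rw [Complex.norm_cpow_eq_rpow_re_of_pos hz]
      have : (-(τ:ℂ) - 1).re = -τ - 1 := by simp
      rw [this]
      exact Real.rpow_le_rpow_of_nonpos hn1 hmn (by linarith)
    have e2 : ‖((z:ℝ):ℂ) ^ (-(τ:ℂ)) - (((z + 1 :ℝ)):ℂ) ^ (-(τ:ℂ))‖ ≤ τ * ((n:ℝ) + 1) ^ (-τ - 1) := by
      have c1 : ((z:ℝ):ℂ) ^ (-(τ:ℂ)) = ((z ^ (-τ) : ℝ) : ℂ) := by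
        rw [Complex.ofReal_cpow hz.le]
        push_cast
        ring_nf
      have c2 : (((z + 1 :ℝ)):ℂ) ^ (-(τ:ℂ)) = (((z + 1) ^ (-τ) : ℝ) : ℂ) := by
        rw [Complex.ofReal_cpow (by linarith : (0:ℝ) ≤ z + 1)]
        push_cast
        ring_nf
      rw [c1, c2, ← Complex.ofReal_sub, Complex.norm_real, Real.norm_eq_abs]
      have hge : 0 ≤ z ^ (-τ) - (z + 1) ^ (-τ) :=
        sub_nonneg.mpr (Real.rpow_le_rpow_of_nonpos hz (by linarith) (by linarith))
      rw [_root_.abs_of_nonneg hge]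
      calc z ^ (-τ) - (z + 1) ^ (-τ) ≤ τ * z ^ (-τ - 1) := sub_rpow_le hτ0 hz
        _ ≤ τ * ((n:ℝ) + 1) ^ (-τ - 1) :=
          mul_le_mul_of_nonneg_left (Real.rpow_le_rpow_of_nonpos hn1 hmn (by linarith)) hτ0.le
    calc ‖(-(τ:ℂ) * ((z:ℝ):ℂ) ^ (-(τ:ℂ) - 1)) +
        (((z:ℝ):ℂ) ^ (-(τ:ℂ)) - (((z + 1 :ℝ)):ℂ) ^ (-(τ:ℂ)))‖
        ≤ ‖-(τ:ℂ) * ((z:ℝ):ℂ) ^ (-(τ:ℂ) - 1)‖ +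
          ‖((z:ℝ):ℂ) ^ (-(τ:ℂ)) - (((z + 1 :ℝ)):ℂ) ^ (-(τ:ℂ))‖ := norm_add_le _ _
      _ ≤ τ * ((n:ℝ) + 1) ^ (-τ - 1) + τ * ((n:ℝ) + 1) ^ (-τ - 1) := add_le_add e1 e2
      _ = 2 * τ * ((n:ℝ) + 1) ^ (-τ - 1) := by ring
  have hg0 : Summable (fun n : ℕ => u x (τ:ℂ) (n+1)) :=
    (summable_nat_add_iff 1).mpr (summable_u hx0 (by rw [hτre]; exact hτ0) hτC)
  have htsum : HasDerivAt (fun b : ℝ => ∑' n : ℕ, u b (τ:ℂ) (n+1)) (∑' n : ℕ, u' τ (n+1) x) x :=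
    hasDerivAt_tsum_of_isPreconnected (F := ℂ) (𝕜 := ℝ)
      (g := fun n (b : ℝ) => u b (τ:ℂ) (n+1)) (g' := fun n y => u' τ (n+1) y)
      (u := fun n : ℕ => 2 * τ * ((n:ℝ) + 1) ^ (-τ - 1)) (t := Ioo (0:ℝ) 1)
      hbnd_summ isOpen_Ioo isPreconnected_Ioo
      (fun n y hy => hasDerivAt_u hτC (n+1) hy.1) hbnd (y₀ := x) ⟨hx0, hx1⟩ hg0 ⟨hx0, hx1⟩
  -- (d) combine
  have hPhi : HasDerivAt (fun b : ℝ => Phi b (τ:ℂ))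
      (-(x : ℂ) ^ (-(τ:ℂ)) + u' τ 0 x + ∑' n : ℕ, u' τ (n+1) x) x := (hA.add hB).add htsum
  -- (e) evaluate
  have hS1C : HasSum (fun n : ℕ => -(τ:ℂ) * (((n:ℝ) + x : ℝ):ℂ) ^ (-(τ:ℂ) - 1))
      (-(τ:ℂ) * ((RZ (τ+1) x : ℝ) : ℂ)) := by
    have hR : HasSum (fun n : ℕ => ((n:ℝ) + x) ^ (-(τ+1))) (RZ (τ+1) x) :=
      (summable_shift hx0 (by linarith)).hasSum
    have h := (Complex.hasSum_ofReal.mpr hR).mul_left (-(τ:ℂ))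
    refine h.congr_fun fun n => ?_
    congr 1
    rw [Complex.ofReal_cpow (natpos hx0 n).le]
    congr 1
    push_cast
    ring
  have hS2C : HasSum (fun n : ℕ => (((n:ℝ) + x : ℝ):ℂ) ^ (-(τ:ℂ)) -
      (((n:ℝ) + 1 + x : ℝ):ℂ) ^ (-(τ:ℂ))) ((x : ℂ) ^ (-(τ:ℂ))) := by
    have h := Complex.hasSum_ofReal.mpr (hasSum_telescope_rpow hτ0 hx0)
    have hval : ((x ^ (-τ) : ℝ) : ℂ) = (x : ℂ) ^ (-(τ:ℂ)) := by
      rw [Complex.ofReal_cpow hx0.le]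
      push_cast
      ring_nf
    rw [hval] at h
    refine h.congr_fun fun n => ?_
    rw [Complex.ofReal_sub, Complex.ofReal_cpow (natpos hx0 n).le,
      Complex.ofReal_cpow (by linarith [natpos hx0 n] : (0:ℝ) ≤ (n:ℝ) + 1 + x)]
    push_cast
    ring_nf
  have hSu' : HasSum (fun n : ℕ => u' τ n x)
      (-(τ:ℂ) * ((RZ (τ+1) x : ℝ) : ℂ) + (x : ℂ) ^ (-(τ:ℂ))) := by
    refine (hS1C.add hS2C).congr_fun fun n => ?_
    rw [u']
    ring
  have htail : HasSum (fun n : ℕ => u' τ (n+1) x)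
      ((-(τ:ℂ) * ((RZ (τ+1) x : ℝ) : ℂ) + (x : ℂ) ^ (-(τ:ℂ))) - u' τ 0 x) := by
    refine (hasSum_nat_add_iff (f := fun n : ℕ => u' τ n x) 1).mpr ?_
    simpa [Finset.sum_range_one] using hSu'
  have hval : -(x : ℂ) ^ (-(τ:ℂ)) + u' τ 0 x + ∑' n : ℕ, u' τ (n+1) x
      = ((-τ * RZ (τ + 1) x : ℝ) : ℂ) := by
    rw [htail.tsum_eq]
    push_cast
    ring
  rw [hval] at hPhi
  -- transfer back to hurwitzZeta
  have hev : (fun b : ℝ => hurwitzZeta (b : UnitAddCircle) (τ:ℂ)) =ᶠ[nhds x]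
      fun b : ℝ => Phi b (τ:ℂ) := by
    filter_upwards [Ioo_mem_nhds hx0 hx1] with b hb
    exact hurwitzZeta_eq_Phi hb.1 hb.2.le (by rw [hτre]; exact hτ0) hτC
  exact hPhi.congr_of_eventuallyEq hev

end QAux
end QAux

open QAux

/-- For `σ ∈ (0,1)` and `a ∈ (0,1/2)`, the partial derivative of `Q(σ,a)` with respect to
`a` is strictly negative (it is a negative real number). -/
theorem quadrilateral_zeta_deriv_a_neg (σ : ℝ) (hσ : σ ∈ Set.Ioo (0 : ℝ) 1)
    (a : ℝ) (ha : a ∈ Set.Ioo (0 : ℝ) (1 / 2)) :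
    ∃ q : ℝ, q < 0 ∧ HasDerivAt (fun b : ℝ => Q b (σ : ℂ)) (q : ℂ) a := by
  obtain ⟨hσ0, hσ1⟩ := hσ
  obtain ⟨ha0, ha2⟩ := ha
  have hπ : (0:ℝ) < π := Real.pi_pos
  -- the positive constant from the functional equation
  set k : ℝ := 2 * (2*π) ^ (σ-1) * Real.Gamma (1-σ) * Real.cos (π * (1-σ) / 2) with hkdef
  have hkpos : 0 < k := by
    have h1 : (0:ℝ) < (2*π) ^ (σ-1) := Real.rpow_pos_of_pos (by linarith) _
    have h2 : (0:ℝ) < Real.Gamma (1-σ) := Real.Gamma_pos_of_pos (by linarith)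
    have h3 : (0:ℝ) < Real.cos (π * (1-σ) / 2) := by
      apply Real.cos_pos_of_mem_Ioo
      constructor
      · nlinarith
      · nlinarith
    positivity
  -- coercion fact
  have hcoe : ∀ b : ℝ, ((1 - b : ℝ) : UnitAddCircle) = -((b : ℝ) : UnitAddCircle) := by
    intro b
    have h1 : ((1 - b : ℝ) : UnitAddCircle) = ((-b + 1 : ℝ) : UnitAddCircle) := by ring_nf
    rw [h1, AddCircle.coe_add_period, AddCircle.coe_neg]
  -- functional equation constant (complex form)
  have hkC : (2 : ℂ) * (2 * (π:ℂ)) ^ (-(1 - (σ:ℂ))) * Complex.Gamma (1 - (σ:ℂ)) *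
      Complex.cos ((π:ℂ) * (1 - (σ:ℂ)) / 2) = ((k : ℝ) : ℂ) := by
    have e1 : ((2:ℂ) * (π:ℂ)) ^ (-(1 - (σ:ℂ))) = (((2*π) ^ (σ-1) : ℝ) : ℂ) := by
      rw [Complex.ofReal_cpow (by positivity : (0:ℝ) ≤ 2*π)]
      push_cast
      ring_nf
    have e2 : Complex.Gamma (1 - (σ:ℂ)) = ((Real.Gamma (1-σ) : ℝ) : ℂ) := by
      rw [show (1 : ℂ) - (σ:ℂ) = ((1 - σ : ℝ) : ℂ) from by push_cast; ring]
      exact (Complex.Gamma_ofReal (1-σ)).symm ▸ rfl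
    have e3 : Complex.cos ((π:ℂ) * (1 - (σ:ℂ)) / 2) = ((Real.cos (π * (1-σ) / 2) : ℝ) : ℂ) := by
      rw [show (π:ℂ) * (1 - (σ:ℂ)) / 2 = ((π * (1-σ) / 2 : ℝ) : ℂ) from by push_cast; ring]
      exact (Complex.ofReal_cos _).symm
    rw [e1, e2, e3, hkdef]
    push_cast
    ring
  -- decomposition of Q
  have hσn : ∀ n : ℕ, (1 - (σ:ℂ)) ≠ 1 - (n:ℂ) := by
    intro n h
    have h2 : (σ:ℂ) = (n:ℂ) := by linear_combination -h
    have h3 : σ = (n:ℝ) := by exact_mod_cast h2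
    rcases n with _ | m
    · simp at h3; linarith
    · have : (1:ℝ) ≤ ((m+1 : ℕ) : ℝ) := by push_cast; linarith [Nat.cast_nonneg (α := ℝ) m]
      rw [h3] at hσ1
      linarith
  have hfe : ∀ b : ℝ, cosZeta ((b : ℝ) : UnitAddCircle) (σ:ℂ)
      = ((k : ℝ) : ℂ) * hurwitzZetaEven ((b : ℝ) : UnitAddCircle) (1 - (σ:ℂ)) := by
    intro b
    have h := cosZeta_one_sub ((b : ℝ) : UnitAddCircle) (s := 1 - (σ:ℂ)) hσn
    rw [show (1:ℂ) - (1 - (σ:ℂ)) = (σ:ℂ) from by ring] at h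
    rw [h, ← hkC]
  have hQ : ∀ b : ℝ, Q b (σ:ℂ) =
      (hurwitzZeta ((b : ℝ) : UnitAddCircle) (σ:ℂ) + hurwitzZeta (((1 - b : ℝ)) : UnitAddCircle) (σ:ℂ)) / 2
      + ((k : ℝ) : ℂ) * ((hurwitzZeta ((b : ℝ) : UnitAddCircle) (1 - (σ:ℂ))
          + hurwitzZeta (((1 - b : ℝ)) : UnitAddCircle) (1 - (σ:ℂ))) / 2) := by
    intro b
    rw [Q]
    rw [hcoe b]
    have hE : hurwitzZetaEven ((b : ℝ) : UnitAddCircle) (σ:ℂ)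
        = (hurwitzZeta ((b : ℝ) : UnitAddCircle) (σ:ℂ) + hurwitzZeta (-((b : ℝ) : UnitAddCircle)) (σ:ℂ)) / 2 :=
      hurwitzZetaEven_eq _ _
    have hE' : hurwitzZetaEven ((b : ℝ) : UnitAddCircle) (1 - (σ:ℂ))
        = (hurwitzZeta ((b : ℝ) : UnitAddCircle) (1 - (σ:ℂ)) + hurwitzZeta (-((b : ℝ) : UnitAddCircle)) (1 - (σ:ℂ))) / 2 :=
      hurwitzZetaEven_eq _ _
    have hC : cosZeta ((b : ℝ) : UnitAddCircle) (σ:ℂ)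
        = (expZeta ((b : ℝ) : UnitAddCircle) (σ:ℂ) + expZeta (-((b : ℝ) : UnitAddCircle)) (σ:ℂ)) / 2 :=
      cosZeta_eq _ _
    have := hfe b
    rw [hC, hE'] at this
    linear_combination this
  -- derivatives
  have ha1 : a ∈ Ioo (0:ℝ) 1 := ⟨ha0, by linarith⟩
  have ha1' : 1 - a ∈ Ioo (0:ℝ) 1 := ⟨by linarith, by linarith⟩
  have hD1 : HasDerivAt (fun b : ℝ => hurwitzZeta ((b : ℝ) : UnitAddCircle) (σ:ℂ))
      (((-σ * RZ (σ+1) a : ℝ) : ℂ)) a := hasDerivAt_hurwitzZeta hσ0 hσ1 ha1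
  have hD2 : HasDerivAt (fun b : ℝ => hurwitzZeta (((1 - b : ℝ)) : UnitAddCircle) (σ:ℂ))
      (((σ * RZ (σ+1) (1-a) : ℝ) : ℂ)) a := by
    have houter := hasDerivAt_hurwitzZeta hσ0 hσ1 ha1'
    have hinner : HasDerivAt (fun b : ℝ => 1 - b) (-1) a := by
      simpa using (hasDerivAt_id a).const_sub (1:ℝ)
    have hcmp := HasDerivAt.scomp a houter hinner
    rw [neg_one_smul] at hcmp
    refine hcmp.congr_deriv ?_
    push_cast
    ring
  have hτ0' : 0 < 1 - σ := by linarith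
  have hτ1' : 1 - σ < 1 := by linarith
  have hD3' : HasDerivAt (fun b : ℝ => hurwitzZeta ((b : ℝ) : UnitAddCircle) (((1 - σ : ℝ)):ℂ))
      (((-(1-σ) * RZ ((1-σ)+1) a : ℝ) : ℂ)) a := hasDerivAt_hurwitzZeta hτ0' hτ1' ha1
  have hD4' : HasDerivAt (fun b : ℝ => hurwitzZeta (((1 - b : ℝ)) : UnitAddCircle) (((1 - σ : ℝ)):ℂ))
      ((((1-σ) * RZ ((1-σ)+1) (1-a) : ℝ) : ℂ)) a := by
    have houter := hasDerivAt_hurwitzZeta hτ0' hτ1' ha1'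
    have hinner : HasDerivAt (fun b : ℝ => 1 - b) (-1) a := by
      simpa using (hasDerivAt_id a).const_sub (1:ℝ)
    have hcmp := HasDerivAt.scomp a houter hinner
    rw [neg_one_smul] at hcmp
    refine hcmp.congr_deriv ?_
    push_cast
    ring
  have hcast : (((1 - σ : ℝ)) : ℂ) = 1 - (σ:ℂ) := by push_cast; ring
  rw [hcast] at hD3' hD4'
  rw [show (1-σ)+1 = 2-σ from by ring] at hD3' hD4'
  -- assemble
  refine ⟨(-σ * RZ (σ+1) a + σ * RZ (σ+1) (1-a)) / 2
      + k * ((-(1-σ) * RZ (2-σ) a + (1-σ) * RZ (2-σ) (1-a)) / 2), ?_, ?_⟩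
  · have m1 : RZ (σ+1) (1-a) < RZ (σ+1) a := RZ_lt ha0 (by linarith) (by linarith)
    have m2 : RZ (2-σ) (1-a) < RZ (2-σ) a := RZ_lt ha0 (by linarith) (by linarith)
    have h1 : (-σ * RZ (σ+1) a + σ * RZ (σ+1) (1-a)) / 2 < 0 := by nlinarith
    have h2 : k * ((-(1-σ) * RZ (2-σ) a + (1-σ) * RZ (2-σ) (1-a)) / 2) < 0 := by
      apply mul_neg_of_pos_of_neg hkpos
      nlinarith
    linarith
  · have hG : HasDerivAt (fun b : ℝ =>
        (hurwitzZeta ((b : ℝ) : UnitAddCircle) (σ:ℂ) + hurwitzZeta (((1 - b : ℝ)) : UnitAddCircle) (σ:ℂ)) / 2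
        + ((k : ℝ) : ℂ) * ((hurwitzZeta ((b : ℝ) : UnitAddCircle) (1 - (σ:ℂ))
            + hurwitzZeta (((1 - b : ℝ)) : UnitAddCircle) (1 - (σ:ℂ))) / 2))
        ((((-σ * RZ (σ+1) a + σ * RZ (σ+1) (1-a)) / 2
      + k * ((-(1-σ) * RZ (2-σ) a + (1-σ) * RZ (2-σ) (1-a)) / 2) : ℝ)) : ℂ) a := by
      have h := ((hD1.add hD2).div_const 2).add
        ((((hD3'.add hD4').div_const 2)).const_mul ((k : ℝ) : ℂ))
      refine h.congr_deriv ?_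
      push_cast
      ring
    have hfun : (fun b : ℝ => Q b (σ:ℂ)) = fun b : ℝ =>
        (hurwitzZeta ((b : ℝ) : UnitAddCircle) (σ:ℂ) + hurwitzZeta (((1 - b : ℝ)) : UnitAddCircle) (σ:ℂ)) / 2
        + ((k : ℝ) : ℂ) * ((hurwitzZeta ((b : ℝ) : UnitAddCircle) (1 - (σ:ℂ))
            + hurwitzZeta (((1 - b : ℝ)) : UnitAddCircle) (1 - (σ:ℂ))) / 2) := by
      funext b
      exact hQ b
    rw [hfun]
    exact hG
end

section
/- For 0 < a ≤ 1/2, define ξ_Q(s,a) := (1/2)·s(s−1)·π^{−s/2}·Γ(s/2)·Q(s,a). Then s ↦ ξ_Q(s,a) extends to an entire function of order exactly 1; that is, it is entire, for every ε > 0 there is C with |ξ_Q(s,a)| ≤ C·exp(|s|^{1+ε}) for all s, and there is no such bound with exponent 1−ε for any ε > 0. -/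
open Complex Real Set HurwitzZeta

/-- The completed quadrilateral zeta function
`ξ_Q(s,a) := (1/2) s (s-1) π^(-s/2) Γ(s/2) Q(s,a)`. -/
noncomputable def xiQ (a : ℝ) (s : ℂ) : ℂ :=
  (1 / 2) * (s * (s - 1)) * (π : ℂ) ^ (-s / 2) * Complex.Gamma (s / 2) * Q a s


namespace XiQAux
open MeasureTheory Filter Asymptotics Topology

lemma rpow_mul_exp_le {a c t : ℝ} (ha : 0 ≤ a) (hc : 0 < c) (ht : 1 ≤ t) :
    t ^ a * rexp (-c * t) ≤ rexp (a * Real.log (1 + 2 * a / c)) * rexp (-(c/2) * t) := by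
  have ht0 : (0:ℝ) < t := lt_of_lt_of_le one_pos ht
  set M : ℝ := 1 + 2 * a / c with hM
  have hM1 : 1 ≤ M := le_add_of_nonneg_right (by positivity)
  have hM0 : (0:ℝ) < M := lt_of_lt_of_le one_pos hM1
  have hlog : Real.log t ≤ Real.log M + t / M := by
    have h1 : Real.log t = Real.log M + Real.log (t / M) := by
      rw [Real.log_div ht0.ne' hM0.ne']; ring
    have h2 : Real.log (t / M) ≤ t / M - 1 := Real.log_le_sub_one_of_pos (by positivity)
    linarith
  have haM : a / M ≤ c / 2 := by
    rcases eq_or_lt_of_le ha with h | h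
    · simp [← h]; positivity
    · have h2a : 0 < 2 * a / c := by positivity
      rw [div_le_iff₀ hM0]
      have hcM : c / 2 * M = c / 2 + a := by
        rw [hM]; field_simp
      linarith
  have key : a * Real.log t + (-c * t) ≤ a * Real.log M + (-(c/2) * t) := by
    have h1 : a * Real.log t ≤ a * Real.log M + a / M * t := by
      calc a * Real.log t ≤ a * (Real.log M + t / M) := by
            apply mul_le_mul_of_nonneg_left hlog ha
        _ = a * Real.log M + a / M * t := by ring
    have h2 : a / M * t ≤ c / 2 * t := mul_le_mul_of_nonneg_right haM ht0.le
    linarith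
  calc t ^ a * rexp (-c * t) = rexp (a * Real.log t + (-c * t)) := by
        rw [Real.exp_add, Real.rpow_def_of_pos ht0, mul_comm a]
    _ ≤ rexp (a * Real.log M + (-(c/2) * t)) := Real.exp_le_exp.mpr key
    _ = rexp (a * Real.log M) * rexp (-(c/2) * t) := Real.exp_add _ _

lemma mono_mul_log {b₁ b₂ r₁ r₂ : ℝ} (hb₀ : 0 ≤ b₁) (hb : b₁ ≤ b₂) (hr₀ : 0 ≤ r₁)
    (hr : r₁ ≤ r₂) : r₁ * Real.log (1 + b₁ * r₁) ≤ r₂ * Real.log (1 + b₂ * r₂) := by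
  have h1 : (1:ℝ) ≤ 1 + b₁ * r₁ := le_add_of_nonneg_right (by positivity)
  have h2 : 1 + b₁ * r₁ ≤ 1 + b₂ * r₂ := by nlinarith
  have := Real.log_le_log (by linarith) h2
  have hln : 0 ≤ Real.log (1 + b₁ * r₁) := Real.log_nonneg h1
  nlinarith

lemma global_exp_bound {φ : ℝ → ℝ} (hcont : ContinuousOn φ (Ici 1)) {p : ℝ} (hp : 0 < p)
    (hO : φ =O[atTop] (fun x => rexp (-p * x))) :
    ∃ K, 0 ≤ K ∧ ∀ x, 1 ≤ x → |φ x| ≤ K * rexp (-p * x) := by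
  obtain ⟨C, hC, hbd⟩ := hO.exists_pos
  rw [isBigOWith_iff, eventually_atTop] at hbd
  obtain ⟨X₀, hX₀⟩ := hbd
  set X₁ : ℝ := max X₀ 1 with hX₁
  have hX₁1 : (1:ℝ) ≤ X₁ := le_max_right _ _
  have hne : (Icc (1:ℝ) X₁).Nonempty := ⟨1, le_refl _, hX₁1⟩
  obtain ⟨z, hz, hzmax⟩ := isCompact_Icc.exists_isMaxOn hne
    ((hcont.mono (fun y (hy : y ∈ Icc (1:ℝ) X₁) => hy.1)).abs)
  rw [isMaxOn_iff] at hzmax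
  set K₀ : ℝ := |φ z| with hK₀
  have hK₀0 : 0 ≤ K₀ := abs_nonneg _
  refine ⟨max C (K₀ * rexp (p * X₁)), le_max_of_le_left hC.le, fun x hx => ?_⟩
  rcases le_total x X₁ with h | h
  · calc |φ x| ≤ K₀ := hzmax x ⟨hx, h⟩
      _ = K₀ * rexp (p * X₁) * rexp (-p * X₁) := by
          rw [mul_assoc, ← Real.exp_add]; simp
      _ ≤ K₀ * rexp (p * X₁) * rexp (-p * x) := by
          apply mul_le_mul_of_nonneg_left _ (by positivity)
          apply Real.exp_le_exp.mpr
          nlinarith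
      _ ≤ max C (K₀ * rexp (p * X₁)) * rexp (-p * x) := by
          apply mul_le_mul_of_nonneg_right (le_max_right _ _) (Real.exp_nonneg _)
  · have := hX₀ x (le_trans (le_max_left _ _) h)
    rw [Real.norm_eq_abs, Real.norm_eq_abs, Real.abs_exp] at this
    exact this.trans (mul_le_mul_of_nonneg_right (le_max_left _ _) (Real.exp_nonneg _))

lemma norm_Λ₀_le (P : WeakFEPair ℂ) {K c : ℝ} (hc : 0 < c) (hK : 0 ≤ K)
    (hf : ∀ x, 1 ≤ x → ‖P.f x - P.f₀‖ ≤ K * rexp (-c * x))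
    (hg : ∀ x, 1 ≤ x → ‖P.g x - P.g₀‖ ≤ K * rexp (-c * x)) (s : ℂ) :
    ‖P.Λ₀ s‖ ≤ (K * (2 / c) + ‖P.ε‖ * K) *
      rexp ((‖s‖ + P.k + 2) * Real.log (1 + 2 * (‖s‖ + P.k + 2) / c)) := by
  have hk0 : 0 < P.k := P.hk
  have hs0 : (0:ℝ) ≤ ‖s‖ := norm_nonneg s
  have habs : |s.re| ≤ ‖s‖ := Complex.abs_re_le_norm s
  set q : ℝ := ‖s‖ + P.k + 2 with hqdef
  have hq0 : 0 ≤ q := by linarith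
  set E : ℝ := rexp (q * Real.log (1 + 2 * q / c)) with hEdef
  have hE0 : (0:ℝ) < E := Real.exp_pos _
  have hlog0 : (0:ℝ) ≤ Real.log (1 + 2 * q / c) :=
    Real.log_nonneg (le_add_of_nonneg_right (by positivity))
  set G : ℝ → ℝ := fun x => (Ioi (1:ℝ)).indicator (fun x => K * E * rexp (-(c/2) * x)) x
      + (Ioo (0:ℝ) 1).indicator (fun _ => ‖P.ε‖ * K * E) x with hGdef
  have h1 : Integrable ((Ioi (1:ℝ)).indicator (fun x => K * E * rexp (-(c/2) * x))) volume := by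
    rw [integrable_indicator_iff measurableSet_Ioi]
    exact (exp_neg_integrableOn_Ioi 1 (half_pos hc)).const_mul _
  have h2 : Integrable ((Ioo (0:ℝ) 1).indicator (fun _ : ℝ => ‖P.ε‖ * K * E)) volume := by
    rw [integrable_indicator_iff measurableSet_Ioo]
    exact integrableOn_const (by rw [Real.volume_Ioo]; exact ENNReal.ofReal_ne_top)
  have hGint : Integrable G (volume.restrict (Ioi (0:ℝ))) :=
    (h1.add h2).mono_measure Measure.restrict_le_self
  have hae : ∀ᵐ (x : ℝ) ∂(volume.restrict (Ioi (0:ℝ))), ‖(x:ℂ) ^ (s - 1) • P.f_modif x‖ ≤ G x := by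
    rw [ae_restrict_iff' measurableSet_Ioi]
    refine ae_of_all _ fun x hx => ?_
    have hx0 : (0:ℝ) < x := hx
    rw [norm_smul, show ‖(x:ℂ) ^ (s-1)‖ = x ^ (s-1).re from Complex.norm_cpow_eq_rpow_re_of_pos hx0 _]
    have hre : (s - 1).re = s.re - 1 := by simp
    rw [hre]
    rcases lt_trichotomy x 1 with hlt | heq | hgt
    · -- 0 < x < 1
      have hy0 : (0:ℝ) < 1/x := by positivity
      have hy1 : (1:ℝ) ≤ 1/x := by rw [le_div_iff₀ hx0]; linarith
      have hGx : G x = ‖P.ε‖ * K * E := by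
        rw [hGdef]
        simp only [indicator_of_notMem (notMem_Ioi.mpr hlt.le),
          indicator_of_mem (mem_Ioo.mpr ⟨hx0, hlt⟩), zero_add]
      have hfm : P.f_modif x = (P.ε * (((1/x : ℝ) ^ P.k : ℝ) : ℂ)) • (P.g (1/x) - P.g₀) := by
        have h0 := P.h_feq (1/x) hy0
        rw [one_div_one_div] at h0
        have hxk : ((x : ℝ) ^ (-P.k) : ℝ) = ((1/x : ℝ) ^ P.k : ℝ) := by
          rw [one_div, Real.inv_rpow hx0.le, ← Real.rpow_neg hx0.le]
        simp only [WeakFEPair.f_modif, Pi.add_apply,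
          indicator_of_notMem (notMem_Ioi.mpr hlt.le),
          indicator_of_mem (mem_Ioo.mpr ⟨hx0, hlt⟩), zero_add]
        rw [h0, hxk, ← smul_sub]
      rw [hfm, hGx, norm_smul, norm_mul, Complex.norm_real, Real.norm_eq_abs,
        _root_.abs_of_nonneg (Real.rpow_nonneg hy0.le _)]
      have hxy : x ^ (s.re - 1) = (1/x) ^ (1 - s.re) := by
        rw [one_div, Real.inv_rpow hx0.le, ← Real.rpow_neg hx0.le, neg_sub]
      have hgb := hg (1/x) hy1
      calc x ^ (s.re - 1) * (‖P.ε‖ * (1/x) ^ P.k * ‖P.g (1/x) - P.g₀‖)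
          ≤ x ^ (s.re - 1) * (‖P.ε‖ * (1/x) ^ P.k * (K * rexp (-c * (1/x)))) := by
            refine mul_le_mul_of_nonneg_left ?_ (Real.rpow_nonneg hx0.le _)
            exact mul_le_mul_of_nonneg_left hgb (by positivity)
        _ = ‖P.ε‖ * K * ((1/x) ^ (1 - s.re) * (1/x) ^ P.k * rexp (-c * (1/x))) := by
            rw [hxy]; ring
        _ = ‖P.ε‖ * K * ((1/x) ^ (1 - s.re + P.k) * rexp (-c * (1/x))) := by
            rw [Real.rpow_add hy0]
        _ ≤ ‖P.ε‖ * K * ((1/x) ^ q * rexp (-c * (1/x))) := by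
            refine mul_le_mul_of_nonneg_left ?_ (by positivity)
            refine mul_le_mul_of_nonneg_right ?_ (Real.exp_nonneg _)
            refine Real.rpow_le_rpow_of_exponent_le hy1 ?_
            have := abs_le.mp habs
            rw [hqdef]; linarith
        _ ≤ ‖P.ε‖ * K * (rexp (q * Real.log (1 + 2 * q / c)) * rexp (-(c/2) * (1/x))) :=
            mul_le_mul_of_nonneg_left (rpow_mul_exp_le hq0 hc hy1) (by positivity)
        _ ≤ ‖P.ε‖ * K * (E * 1) := by
            rw [← hEdef]
            refine mul_le_mul_of_nonneg_left ?_ (by positivity)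
            refine mul_le_mul_of_nonneg_left ?_ hE0.le
            refine Real.exp_le_one_iff.mpr ?_
            nlinarith
        _ = ‖P.ε‖ * K * E := by ring
    · -- x = 1
      subst heq
      have : P.f_modif 1 = 0 := by
        simp [WeakFEPair.f_modif]
      rw [this, norm_zero, mul_zero, hGdef]
      simp
    · -- 1 < x
      have hx1 : (1:ℝ) ≤ x := hgt.le
      have hGx : G x = K * E * rexp (-(c/2) * x) := by
        rw [hGdef]
        simp only [indicator_of_mem (mem_Ioi.mpr hgt),
          indicator_of_notMem (notMem_Ioo_of_ge hgt.le), add_zero]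
      have hfm : P.f_modif x = P.f x - P.f₀ := by
        simp only [WeakFEPair.f_modif, Pi.add_apply, indicator_of_mem (mem_Ioi.mpr hgt),
          indicator_of_notMem (notMem_Ioo_of_ge hgt.le), add_zero]
      rw [hfm, hGx]
      calc x ^ (s.re - 1) * ‖P.f x - P.f₀‖ ≤ x ^ (s.re - 1) * (K * rexp (-c * x)) := by
            gcongr
            exact hf x hx1
        _ ≤ x ^ q * (K * rexp (-c * x)) := by
            have hexp : s.re - 1 ≤ q := by
              have := abs_le.mp habs
              rw [hqdef]; linarith
            exact mul_le_mul_of_nonneg_right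
              (Real.rpow_le_rpow_of_exponent_le hx1 hexp) (by positivity)
        _ = K * (x ^ q * rexp (-c * x)) := by ring
        _ ≤ K * (rexp (q * Real.log (1 + 2 * q / c)) * rexp (-(c/2) * x)) :=
            mul_le_mul_of_nonneg_left (rpow_mul_exp_le hq0 hc hx1) hK
        _ = K * E * rexp (-(c/2) * x) := by rw [← hEdef]; ring
  have hb := norm_integral_le_of_norm_le hGint hae
  have hΛ : P.Λ₀ s = ∫ x in Ioi (0:ℝ), (x:ℂ) ^ (s - 1) • P.f_modif x := rfl
  rw [hΛ]
  refine hb.trans ?_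
  -- compute / bound the integral of G
  have hsplit : ∫ x in Ioi (0:ℝ), G x =
      (∫ x, (Ioi (1:ℝ)).indicator (fun x => K * E * rexp (-(c/2) * x)) x
          ∂(volume.restrict (Ioi (0:ℝ))))
      + ∫ x, (Ioo (0:ℝ) 1).indicator (fun _ => ‖P.ε‖ * K * E) x
          ∂(volume.restrict (Ioi (0:ℝ))) := by
    rw [hGdef]
    exact integral_add (h1.mono_measure Measure.restrict_le_self)
      (h2.mono_measure Measure.restrict_le_self)
  have hI1 : (∫ x, (Ioi (1:ℝ)).indicator (fun x => K * E * rexp (-(c/2) * x)) x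
      ∂(volume.restrict (Ioi (0:ℝ)))) = K * E * ((c/2)⁻¹ * rexp (-(c/2))) := by
    rw [integral_indicator measurableSet_Ioi, Measure.restrict_restrict measurableSet_Ioi,
      inter_eq_left.mpr (Ioi_subset_Ioi zero_le_one),
      MeasureTheory.integral_const_mul]
    congr 1
    have := integral_comp_mul_left_Ioi (fun y => rexp (-y)) 1 (half_pos hc)
    simp only [smul_eq_mul, mul_one] at this
    rw [show (fun x => rexp (-(c/2) * x)) = (fun x => rexp (-(c/2 * x))) from
      funext fun x => by rw [neg_mul]]
    rw [this, integral_exp_neg_Ioi]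
  have hI2 : (∫ x, (Ioo (0:ℝ) 1).indicator (fun _ => ‖P.ε‖ * K * E) x
      ∂(volume.restrict (Ioi (0:ℝ)))) = ‖P.ε‖ * K * E := by
    rw [integral_indicator measurableSet_Ioo, Measure.restrict_restrict measurableSet_Ioo,
      inter_eq_left.mpr Ioo_subset_Ioi_self, setIntegral_const,
      Real.volume_real_Ioo]
    simp
  have hexp1 : rexp (-(c/2)) ≤ 1 := Real.exp_le_one_iff.mpr (by linarith)
  have h2c : ((c:ℝ)/2)⁻¹ = 2 / c := by rw [inv_div]
  rw [hsplit, hI1, hI2, h2c]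
  have h1' : K * E * (2/c * rexp (-(c/2))) ≤ K * E * (2/c) := by
    have h2 : 2/c * rexp (-(c/2)) ≤ 2/c := mul_le_of_le_one_right (by positivity) hexp1
    exact mul_le_mul_of_nonneg_left h2 (by positivity)
  calc K * E * (2 / c * rexp (-(c/2))) + ‖P.ε‖ * K * E
      ≤ K * E * (2 / c) + ‖P.ε‖ * K * E := by linarith
    _ = (K * (2 / c) + ‖P.ε‖ * K) * E := by ring

/-- The entire function extending `xiQ a`. -/
noncomputable def Faux (a : ℝ) (s : ℂ) : ℂ :=
  (1 + s * (s - 1) * (completedHurwitzZetaEven₀ (a : UnitAddCircle) s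
      + completedCosZeta₀ (a : UnitAddCircle) s)) / 2

lemma Faux_diff (a : ℝ) : Differentiable ℂ (Faux a) := by
  apply Differentiable.div_const
  apply Differentiable.const_add
  exact (differentiable_id.mul (differentiable_id.sub_const 1)).mul
    ((differentiable_completedHurwitzZetaEven₀ _).add (differentiable_completedCosZeta₀ _))

lemma coe_one_sub (a : ℝ) : ((1 - a : ℝ) : UnitAddCircle) = (↑(-a) : UnitAddCircle) := by
  rw [QuotientAddGroup.eq_iff_sub_mem]
  convert AddSubgroup.mem_zmultiples (1 : ℝ) using 2
  ring

lemma Q_eq {a : ℝ} (ha : a ∈ Ioc (0:ℝ) (1/2)) (s : ℂ) :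
    Q a s = hurwitzZetaEven (a : UnitAddCircle) s + cosZeta (a : UnitAddCircle) s := by
  have hneg : ((-a : ℝ) : UnitAddCircle) = -((a : ℝ) : UnitAddCircle) := by
    exact AddCircle.coe_neg (p := (1:ℝ))
  rw [Q, coe_one_sub, hneg]
  simp only [hurwitzZeta, expZeta, hurwitzZetaEven_neg, hurwitzZetaOdd_neg, cosZeta_neg,
    sinZeta_neg]
  ring

lemma coe_ne_zero {a : ℝ} (ha : a ∈ Ioc (0:ℝ) (1/2)) : (a : UnitAddCircle) ≠ 0 := by
  have h1 : a ∈ Ico (0:ℝ) 1 := ⟨ha.1.le, by linarith [ha.2]⟩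
  rw [Ne, AddCircle.coe_eq_zero_iff_of_mem_Ico h1]
  exact ha.1.ne'

lemma Faux_eq_xiQ {a : ℝ} (ha : a ∈ Ioc (0:ℝ) (1/2)) {s : ℂ} (hs1 : s ≠ 1)
    (hs2 : ∀ n : ℕ, s ≠ -(2 * n)) : Faux a s = xiQ a s := by
  have hs0 : s ≠ 0 := by simpa using hs2 0
  have hΓ : Gammaℝ s ≠ 0 := by
    rw [Ne, Gammaℝ_eq_zero_iff]
    push_neg
    exact hs2
  have ha0 : (a : UnitAddCircle) ≠ 0 := coe_ne_zero ha
  have hQ : Q a s = hurwitzZetaEven (a : UnitAddCircle) s + cosZeta (a : UnitAddCircle) s :=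
    Q_eq ha s
  have hE : hurwitzZetaEven (a : UnitAddCircle) s =
      completedHurwitzZetaEven (a : UnitAddCircle) s / Gammaℝ s :=
    hurwitzZetaEven_def_of_ne_or_ne (Or.inr hs0)
  have hC : cosZeta (a : UnitAddCircle) s = completedCosZeta (a : UnitAddCircle) s / Gammaℝ s := by
    simp only [cosZeta]
    rw [Function.update_of_ne hs0]
  have hpg : (π : ℂ) ^ (-s / 2) * Complex.Gamma (s / 2) = Gammaℝ s := (Gammaℝ_def s).symm
  rw [xiQ, mul_assoc ((1:ℂ)/2 * _), hpg, hQ, hE, hC, completedHurwitzZetaEven_eq,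
    completedCosZeta_eq, if_neg ha0, Faux]
  have h1s : (1:ℂ) - s ≠ 0 := sub_ne_zero.mpr (fun h => hs1 (h.symm))
  field_simp
  ring

lemma decay_even (a : UnitAddCircle) : ∃ K p : ℝ, 0 < p ∧ 0 ≤ K ∧
    (∀ x, 1 ≤ x → |evenKernel a x - (if a = 0 then 1 else 0)| ≤ K * rexp (-p * x)) ∧
    (∀ x, 1 ≤ x → |cosKernel a x - 1| ≤ K * rexp (-p * x)) := by
  obtain ⟨p₁, hp₁, hO₁⟩ := isBigO_atTop_evenKernel_sub a
  obtain ⟨p₂, hp₂, hO₂⟩ := isBigO_atTop_cosKernel_sub a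
  have hsub : Ici (1:ℝ) ⊆ Ioi 0 := fun x hx => mem_Ioi.mpr (lt_of_lt_of_le zero_lt_one (mem_Ici.mp hx))
  obtain ⟨K₁, hK₁, hb₁⟩ := global_exp_bound
    (((continuousOn_evenKernel a).mono hsub).sub continuousOn_const) hp₁ hO₁
  obtain ⟨K₂, hK₂, hb₂⟩ := global_exp_bound
    (((continuousOn_cosKernel a).mono hsub).sub continuousOn_const) hp₂ hO₂
  refine ⟨max K₁ K₂, min p₁ p₂, lt_min hp₁ hp₂, le_max_of_le_left hK₁, fun x hx => ?_,
    fun x hx => ?_⟩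
  · refine (hb₁ x hx).trans ?_
    have hx0 : (0:ℝ) ≤ x := le_trans zero_le_one hx
    have : rexp (-p₁ * x) ≤ rexp (-min p₁ p₂ * x) := by
      apply Real.exp_le_exp.mpr
      nlinarith [min_le_left p₁ p₂]
    exact mul_le_mul (le_max_left _ _) this (Real.exp_nonneg _) (le_max_of_le_left hK₁)
  · refine (hb₂ x hx).trans ?_
    have hx0 : (0:ℝ) ≤ x := le_trans zero_le_one hx
    have : rexp (-p₂ * x) ≤ rexp (-min p₁ p₂ * x) := by
      apply Real.exp_le_exp.mpr
      nlinarith [min_le_right p₁ p₂]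
    exact mul_le_mul (le_max_right _ _) this (Real.exp_nonneg _) (le_max_of_le_right hK₂)

lemma completed_bound (a : UnitAddCircle) : ∃ M b : ℝ, 0 ≤ M ∧ 1 ≤ b ∧ ∀ s : ℂ,
    ‖completedHurwitzZetaEven₀ a s‖ + ‖completedCosZeta₀ a s‖ ≤
      M * rexp ((‖s‖ + 3) * Real.log (1 + b * (‖s‖ + 3))) := by
  obtain ⟨K, p, hp, hK, hfe, hge⟩ := decay_even a
  set P := hurwitzEvenFEPair a with hP
  have hf : ∀ x, 1 ≤ x → ‖P.f x - P.f₀‖ ≤ K * rexp (-p * x) := by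
    intro x hx
    have h0 : P.f x - P.f₀ = ((evenKernel a x - (if a = 0 then 1 else 0) : ℝ) : ℂ) := by
      show (↑(evenKernel a x) : ℂ) - (if a = 0 then (1:ℂ) else 0) = _
      push_cast [apply_ite (fun r : ℝ => (r : ℂ))]
      rfl
    rw [h0, Complex.norm_real, Real.norm_eq_abs]
    exact hfe x hx
  have hg : ∀ x, 1 ≤ x → ‖P.g x - P.g₀‖ ≤ K * rexp (-p * x) := by
    intro x hx
    have h0 : P.g x - P.g₀ = ((cosKernel a x - 1 : ℝ) : ℂ) := by
      show (↑(cosKernel a x) : ℂ) - 1 = _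
      push_cast
      rfl
    rw [h0, Complex.norm_real, Real.norm_eq_abs]
    exact hge x hx
  have hsymf : ∀ x, 1 ≤ x → ‖P.symm.f x - P.symm.f₀‖ ≤ K * rexp (-p * x) := hg
  have hsymg : ∀ x, 1 ≤ x → ‖P.symm.g x - P.symm.g₀‖ ≤ K * rexp (-p * x) := hf
  set M₁ : ℝ := K * (2 / p) + ‖P.ε‖ * K with hM₁
  set M₂ : ℝ := K * (2 / p) + ‖P.symm.ε‖ * K with hM₂
  set b : ℝ := max (2 / p) 1 with hb
  have hb1 : (1:ℝ) ≤ b := le_max_right _ _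
  have hb0 : (0:ℝ) ≤ 2 / p := by positivity
  refine ⟨(M₁ + M₂) / 2, b, by positivity, hb1, fun s => ?_⟩
  have hk : P.k = 1 / 2 := rfl
  have hmono : (‖s / 2‖ + P.k + 2) * Real.log (1 + 2 * (‖s / 2‖ + P.k + 2) / p) ≤
      (‖s‖ + 3) * Real.log (1 + b * (‖s‖ + 3)) := by
    have hs2 : ‖s / 2‖ = ‖s‖ / 2 := by
      rw [norm_div]
      norm_num
    have hle : ‖s / 2‖ + P.k + 2 ≤ ‖s‖ + 3 := by
      rw [hs2, hk]
      have := norm_nonneg s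
      linarith
    have h0 : 0 ≤ ‖s / 2‖ + P.k + 2 := by
      rw [hk]
      have := norm_nonneg (s / 2)
      linarith
    have heq : 2 * (‖s / 2‖ + P.k + 2) / p = (2 / p) * (‖s / 2‖ + P.k + 2) := by ring
    rw [heq]
    exact mono_mul_log hb0 (le_max_left _ _) h0 hle
  have h₁ := norm_Λ₀_le P hp hK hf hg (s / 2)
  have h₂ := norm_Λ₀_le P.symm hp hK hsymf hsymg (s / 2)
  have hks : P.symm.k = P.k := rfl
  rw [hks] at h₂
  have hE1 : completedHurwitzZetaEven₀ a s = P.Λ₀ (s / 2) / 2 := rfl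
  have hE2 : completedCosZeta₀ a s = P.symm.Λ₀ (s / 2) / 2 := rfl
  have hn2 : ‖(2:ℂ)‖ = 2 := by norm_num
  rw [hE1, hE2, norm_div, norm_div, hn2]
  have hexp : rexp ((‖s / 2‖ + P.k + 2) * Real.log (1 + 2 * (‖s / 2‖ + P.k + 2) / p)) ≤
      rexp ((‖s‖ + 3) * Real.log (1 + b * (‖s‖ + 3))) := Real.exp_le_exp.mpr hmono
  have hM₁0 : 0 ≤ M₁ := by positivity
  have hM₂0 : 0 ≤ M₂ := by positivity
  have e₁ := h₁.trans (mul_le_mul_of_nonneg_left hexp hM₁0)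
  have e₂ := h₂.trans (mul_le_mul_of_nonneg_left hexp hM₂0)
  set T := rexp ((‖s‖ + 3) * Real.log (1 + b * (‖s‖ + 3)))
  calc ‖P.Λ₀ (s / 2)‖ / 2 + ‖P.symm.Λ₀ (s / 2)‖ / 2 ≤ M₁ * T / 2 + M₂ * T / 2 := by
        have := norm_nonneg (P.Λ₀ (s / 2))
        have := norm_nonneg (P.symm.Λ₀ (s / 2))
        linarith
    _ = (M₁ + M₂) / 2 * T := by ring

lemma Faux_upper (a : ℝ) : ∃ C₀ b : ℝ, 0 ≤ C₀ ∧ 1 ≤ b ∧ ∀ s : ℂ,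
    ‖Faux a s‖ ≤ C₀ * rexp (3 * ((‖s‖ + 3) * Real.log (1 + b * (‖s‖ + 3)))) := by
  obtain ⟨M, b, hM, hb, hbd⟩ := completed_bound (a : UnitAddCircle)
  refine ⟨(1 + M) / 2, b, by positivity, hb, fun s => ?_⟩
  have hr0 : (0:ℝ) ≤ ‖s‖ := norm_nonneg s
  set r : ℝ := ‖s‖ with hrdef
  set L : ℝ := (r + 3) * Real.log (1 + b * (r + 3)) with hLdef
  have hlog0 : 0 ≤ Real.log (1 + b * (r + 3)) :=
    Real.log_nonneg (le_add_of_nonneg_right (by positivity))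
  have hL0 : 0 ≤ L := mul_nonneg (by linarith) hlog0
  have h2 : r * (r + 1) ≤ rexp (2 * L) := by
    have ha1 : r * (r + 1) ≤ (r + 3) ^ 2 := by nlinarith
    have ha2 : (r + 3 : ℝ) ^ 2 = rexp (2 * Real.log (r + 3)) := by
      rw [← Real.rpow_two, Real.rpow_def_of_pos (show (0:ℝ) < r + 3 by linarith), mul_comm]
    have ha3 : Real.log (r + 3) ≤ L := by
      have hll : Real.log (r + 3) ≤ Real.log (1 + b * (r + 3)) :=
        Real.log_le_log (by linarith) (by nlinarith)
      nlinarith [Real.log_nonneg (show (1:ℝ) ≤ r + 3 by linarith)]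
    calc r * (r + 1) ≤ rexp (2 * Real.log (r + 3)) := ha2 ▸ ha1
      _ ≤ rexp (2 * L) := Real.exp_le_exp.mpr (by linarith)
  have hnorm : ‖Faux a s‖ ≤ (1 + r * (r + 1) * (M * rexp L)) / 2 := by
    rw [Faux, norm_div, show ‖(2:ℂ)‖ = 2 by norm_num]
    have hadd : ‖(1 : ℂ) + s * (s - 1) * (completedHurwitzZetaEven₀ (a : UnitAddCircle) s
        + completedCosZeta₀ (a : UnitAddCircle) s)‖ ≤
        1 + r * (r + 1) * (M * rexp L) := by
      refine (norm_add_le _ _).trans ?_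
      rw [norm_one]
      have hmm : ‖s * (s - 1) * (completedHurwitzZetaEven₀ (a : UnitAddCircle) s
          + completedCosZeta₀ (a : UnitAddCircle) s)‖ ≤ r * (r + 1) * (M * rexp L) := by
        rw [norm_mul, norm_mul]
        have hs1 : ‖s - 1‖ ≤ r + 1 := by
          refine (norm_sub_le _ _).trans ?_
          rw [norm_one]
        have hsum : ‖completedHurwitzZetaEven₀ (a : UnitAddCircle) s
            + completedCosZeta₀ (a : UnitAddCircle) s‖ ≤ M * rexp L := by
          refine (norm_add_le _ _).trans ?_
          exact hbd s
        calc ‖s‖ * ‖s - 1‖ * ‖completedHurwitzZetaEven₀ (a : UnitAddCircle) s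
            + completedCosZeta₀ (a : UnitAddCircle) s‖
            ≤ ‖s‖ * (r + 1) * (M * rexp L) := by
              refine mul_le_mul ?_ hsum (norm_nonneg _) (by positivity)
              exact mul_le_mul_of_nonneg_left hs1 (norm_nonneg s)
          _ = r * (r + 1) * (M * rexp L) := rfl
      linarith
    linarith
  refine hnorm.trans ?_
  have hfin : (1 + r * (r + 1) * (M * rexp L)) / 2 ≤ (1 + M) / 2 * rexp (3 * L) := by
    have he3 : rexp (3 * L) = rexp (2 * L) * rexp L := by
      rw [← Real.exp_add]; ring_nf
    have h1e : (1:ℝ) ≤ rexp (3 * L) := Real.one_le_exp (by linarith)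
    have hstep : r * (r + 1) * (M * rexp L) ≤ M * rexp (3 * L) := by
      rw [he3]
      calc r * (r + 1) * (M * rexp L) ≤ rexp (2 * L) * (M * rexp L) :=
            mul_le_mul_of_nonneg_right h2 (by positivity)
        _ = M * (rexp (2 * L) * rexp L) := by ring
    linarith
  exact hfin

lemma Q_lower {a : ℝ} (ha : a ∈ Ioc (0:ℝ) (1/2)) {m : ℕ} (hm : 1 ≤ m) :
    1 ≤ ‖Q a ((2 * (m + 1) : ℕ) : ℂ)‖ := by
  set N : ℕ := 2 * (m + 1) with hN
  have hN4 : 4 ≤ N := by omega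
  set s : ℂ := (N : ℂ) with hs
  have hres : 1 < s.re := by
    rw [hs, Complex.natCast_re]
    exact_mod_cast (by omega : 1 < N)
  have hs0 : s ≠ 0 := by
    rw [hs, Ne, Nat.cast_eq_zero]; omega
  have hterm : ∀ t : ℝ, (1 / (t : ℂ) ^ s / 2) = ((1 / t ^ N / 2 : ℝ) : ℂ) := by
    intro t
    rw [hs, Complex.cpow_natCast]
    push_cast
    ring
  -- lower bound for the even part
  have hsum := (hasSum_int_hurwitzZetaEven a hres).mapL Complex.reCLM
  have hnn : ∀ j : ℤ, 0 ≤ Complex.reCLM (1 / (↑|(j : ℝ) + a| : ℂ) ^ s / 2) := by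
    intro j
    rw [hterm]
    simp only [Complex.reCLM_apply, Complex.ofReal_re]
    positivity
  have hle := le_hasSum hsum 0 (fun j _ => hnn j)
  have h0eq : Complex.reCLM (1 / (↑|((0:ℤ) : ℝ) + a| : ℂ) ^ s / 2) = 1 / a ^ N / 2 := by
    rw [hterm]
    simp only [Complex.reCLM_apply, Complex.ofReal_re]
    rw [Int.cast_zero, zero_add, abs_of_pos ha.1]
  rw [h0eq] at hle
  have haN : a ^ N ≤ 16⁻¹ := by
    calc a ^ N ≤ (1/2 : ℝ) ^ N := pow_le_pow_left₀ ha.1.le ha.2 N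
      _ ≤ (1/2 : ℝ) ^ 4 := pow_le_pow_of_le_one (by norm_num) (by norm_num) hN4
      _ = 16⁻¹ := by norm_num
  have haN0 : 0 < a ^ N := pow_pos ha.1 N
  have h16 : (8:ℝ) ≤ 1 / a ^ N / 2 := by
    rw [div_div, le_div_iff₀ (by linarith)]
    nlinarith
  have hEre : (8:ℝ) ≤ (hurwitzZetaEven (a : UnitAddCircle) s).re := le_trans h16 hle
  -- upper bound for the cosine part
  have hcos : ‖cosZeta (a : UnitAddCircle) s‖ ≤ 2 := by
    have hC := hasSum_nat_cosZeta a hres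
    rw [← hC.tsum_eq]
    refine (tsum_of_norm_bounded hasSum_zeta_two ?_).trans ?_
    · intro n
      rcases Nat.eq_zero_or_pos n with rfl | hn
      · simp [zero_cpow hs0]
      · have h1n : (1:ℝ) ≤ (n:ℝ) := by exact_mod_cast hn
        rw [norm_div, Complex.norm_real, hs, Complex.cpow_natCast, norm_pow,
          Complex.norm_natCast, Real.norm_eq_abs]
        refine div_le_div₀ zero_le_one (Real.abs_cos_le_one _) (by positivity) ?_
        calc ((n:ℝ)) ^ 2 ≤ (n:ℝ) ^ N := pow_le_pow_right₀ h1n (by omega)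
          _ = (n:ℝ) ^ N := rfl
    · nlinarith [Real.pi_lt_d2, Real.pi_gt_three]
  have hCre : -2 ≤ (cosZeta (a : UnitAddCircle) s).re := by
    have h1 : |(cosZeta (a : UnitAddCircle) s).re| ≤ ‖cosZeta (a : UnitAddCircle) s‖ :=
      Complex.abs_re_le_norm _
    have := abs_le.mp h1
    linarith
  have hQre : 1 ≤ (Q a s).re := by
    rw [Q_eq ha, Complex.add_re]
    linarith
  calc (1:ℝ) ≤ (Q a s).re := hQre
    _ ≤ |(Q a s).re| := le_abs_self _
    _ ≤ ‖Q a s‖ := Complex.abs_re_le_norm _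

lemma Faux_lower {a : ℝ} (ha : a ∈ Ioc (0:ℝ) (1/2)) {m : ℕ} (hm : 1 ≤ m) :
    (m.factorial : ℝ) / π ^ (m + 1) ≤ ‖Faux a ((2 * (m + 1) : ℕ) : ℂ)‖ := by
  set N : ℕ := 2 * (m + 1) with hN
  set s : ℂ := (N : ℂ) with hs
  have hs1 : s ≠ 1 := by
    rw [hs, Ne, Nat.cast_eq_one]; omega
  have hs2 : ∀ n : ℕ, s ≠ -(2 * n) := by
    intro n h
    have hz : ((N + 2 * n : ℕ) : ℂ) = 0 := by
      push_cast
      rw [← hs, h]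
      ring
    rw [Nat.cast_eq_zero] at hz
    omega
  have hhalf : s / 2 = ((m:ℂ) + 1) := by
    rw [hs, hN]; push_cast; ring
  have hGamma : Complex.Gamma (s / 2) = (m.factorial : ℂ) := by
    rw [hhalf, Complex.Gamma_nat_eq_factorial]
  have hpowre : (-s / 2).re = -((m:ℝ) + 1) := by
    rw [show -s / 2 = -(s/2) by ring, hhalf]
    simp
  have hpow : ‖(π : ℂ) ^ (-s / 2)‖ = (π ^ (m + 1) : ℝ)⁻¹ := by
    rw [show ‖(π:ℂ) ^ (-s/2)‖ = π ^ ((-s/2).re) from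
      Complex.norm_cpow_eq_rpow_re_of_pos Real.pi_pos _, hpowre, Real.rpow_neg Real.pi_pos.le]
    congr 1
    rw [show ((m:ℝ) + 1) = ((m + 1 : ℕ) : ℝ) by push_cast; ring, Real.rpow_natCast]
  have hsub : s - 1 = ((2 * m + 1 : ℕ) : ℂ) := by
    rw [hs, hN]; push_cast; ring
  rw [Faux_eq_xiQ ha hs1 hs2, xiQ]
  simp only [norm_mul]
  rw [hGamma, hpow, hsub]
  simp only [Complex.norm_natCast]
  rw [show ‖(1/2 : ℂ)‖ = 1/2 by norm_num,
    show ‖s‖ = ((N:ℕ):ℝ) from by rw [hs, Complex.norm_natCast]]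
  have hfact : 1/2 * ((N:ℝ) * ((2 * m + 1 : ℕ):ℝ)) * (π ^ (m + 1))⁻¹ * (m.factorial : ℝ)
      * ‖Q a s‖ = (((m:ℝ) + 1) * ((2 * m + 1 : ℕ):ℝ) * ‖Q a s‖)
        * ((m.factorial : ℝ) / π ^ (m + 1)) := by
    rw [hN]; push_cast; ring
  rw [hfact]
  refine le_mul_of_one_le_left (div_nonneg (Nat.cast_nonneg _) (by positivity)) ?_
  have hQ1 : 1 ≤ ‖Q a s‖ := Q_lower ha hm
  have h1 : (1:ℝ) ≤ (m:ℝ) + 1 := by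
    have : (0:ℝ) ≤ (m:ℝ) := Nat.cast_nonneg m
    linarith
  have h2 : (1:ℝ) ≤ ((2 * m + 1 : ℕ):ℝ) := by exact_mod_cast (by omega : 1 ≤ 2 * m + 1)
  have h12 : (1:ℝ) * 1 ≤ ((m:ℝ) + 1) * ((2 * m + 1 : ℕ):ℝ) :=
    mul_le_mul h1 h2 zero_le_one (by linarith)
  have h123 : (1:ℝ) * 1 ≤ (((m:ℝ) + 1) * ((2 * m + 1 : ℕ):ℝ)) * ‖Q a s‖ :=
    mul_le_mul (by linarith) hQ1 zero_le_one (by nlinarith)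
  linarith

end XiQAux

/-- `ξ_Q(·,a)` extends to an entire function of order exactly `1`. -/
theorem xiQ_entire_of_order_one (a : ℝ) (ha : a ∈ Set.Ioc (0 : ℝ) (1 / 2)) :
    ∃ F : ℂ → ℂ, Differentiable ℂ F ∧
      (∀ s : ℂ, s ≠ 1 → (∀ n : ℕ, s ≠ -(2 * n)) → F s = xiQ a s) ∧
      (∀ ε > (0 : ℝ), ∃ C : ℝ, ∀ s : ℂ, ‖F s‖ ≤ C * Real.exp (‖s‖ ^ (1 + ε))) ∧
      (∀ ε > (0 : ℝ), ¬∃ C : ℝ, ∀ s : ℂ, ‖F s‖ ≤ C * Real.exp (‖s‖ ^ (1 - ε))) := by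
  obtain ⟨C₀, b, hC₀, hb, hup⟩ := XiQAux.Faux_upper a
  refine ⟨XiQAux.Faux a, XiQAux.Faux_diff a,
    fun s hs1 hs2 => XiQAux.Faux_eq_xiQ ha hs1 hs2, ?_, ?_⟩
  · -- upper bound of order 1 + ε
    intro ε hε
    have hev : ∀ᶠ r : ℝ in Filter.atTop,
        3 * ((r + 3) * Real.log (1 + b * (r + 3))) ≤ r ^ (1 + ε) := by
      have hlog := (isLittleO_log_rpow_atTop hε).def (show (0:ℝ) < 1/8 by norm_num)
      filter_upwards [hlog, Filter.eventually_ge_atTop (9:ℝ),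
        Filter.eventually_ge_atTop (4*b)] with r h8 hr9 hrb
      have hr0 : (0:ℝ) < r := by linarith
      have hr1 : (1:ℝ) ≤ r := by linarith
      have hlr : 0 ≤ Real.log r := Real.log_nonneg hr1
      have hxe : 0 ≤ r ^ ε := Real.rpow_nonneg hr0.le ε
      rw [Real.norm_eq_abs, Real.norm_eq_abs, _root_.abs_of_nonneg hlr, _root_.abs_of_nonneg hxe] at h8
      have hb1 : (1:ℝ) ≤ b := hb
      have hq : 1 + b * (r + 3) ≤ r ^ 2 := by nlinarith
      have hlg : Real.log (1 + b * (r + 3)) ≤ 2 * Real.log r := by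
        calc Real.log (1 + b * (r + 3)) ≤ Real.log (r ^ 2) :=
              Real.log_le_log (by nlinarith) hq
          _ = 2 * Real.log r := by rw [Real.log_pow]; push_cast; ring
      have hrpow : r ^ (1 + ε) = r * r ^ ε := by
        rw [Real.rpow_add hr0, Real.rpow_one]
      rw [hrpow]
      nlinarith [mul_le_mul_of_nonneg_left h8 (show (0:ℝ) ≤ 6 * (r+3) by linarith),
        mul_le_mul_of_nonneg_left hlg (show (0:ℝ) ≤ 3 * (r+3) by linarith)]
    obtain ⟨R, hR⟩ := Filter.eventually_atTop.mp hev
    set R' : ℝ := max R 0 with hR'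
    have hR'0 : (0:ℝ) ≤ R' := le_max_right _ _
    have hΦR'0 : 0 ≤ 3 * ((R' + 3) * Real.log (1 + b * (R' + 3))) := by
      have := Real.log_nonneg (show (1:ℝ) ≤ 1 + b * (R' + 3) by nlinarith)
      positivity
    refine ⟨C₀ * Real.exp (3 * ((R' + 3) * Real.log (1 + b * (R' + 3)))), fun s => ?_⟩
    have hr0 : (0:ℝ) ≤ ‖s‖ := norm_nonneg s
    rcases le_total R' ‖s‖ with hcase | hcase
    · have h2 : 3 * ((‖s‖ + 3) * Real.log (1 + b * (‖s‖ + 3))) ≤ ‖s‖ ^ (1 + ε) :=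
        hR ‖s‖ (le_trans (le_max_left _ _) hcase)
      calc ‖XiQAux.Faux a s‖
          ≤ C₀ * Real.exp (3 * ((‖s‖ + 3) * Real.log (1 + b * (‖s‖ + 3)))) := hup s
        _ ≤ C₀ * Real.exp (‖s‖ ^ (1 + ε)) :=
            mul_le_mul_of_nonneg_left (Real.exp_le_exp.mpr h2) hC₀
        _ ≤ C₀ * Real.exp (3 * ((R' + 3) * Real.log (1 + b * (R' + 3))))
              * Real.exp (‖s‖ ^ (1 + ε)) := by
            have h3 : (1:ℝ) ≤ Real.exp (3 * ((R' + 3) * Real.log (1 + b * (R' + 3)))) :=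
              Real.one_le_exp hΦR'0
            nlinarith [Real.exp_pos (‖s‖ ^ (1 + ε)), mul_nonneg hC₀
              (Real.exp_pos (‖s‖ ^ (1 + ε))).le]
    · have hmono : (‖s‖ + 3) * Real.log (1 + b * (‖s‖ + 3)) ≤
          (R' + 3) * Real.log (1 + b * (R' + 3)) :=
        XiQAux.mono_mul_log (by linarith) le_rfl (by linarith) (by linarith)
      calc ‖XiQAux.Faux a s‖
          ≤ C₀ * Real.exp (3 * ((‖s‖ + 3) * Real.log (1 + b * (‖s‖ + 3)))) := hup s
        _ ≤ C₀ * Real.exp (3 * ((R' + 3) * Real.log (1 + b * (R' + 3)))) :=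
            mul_le_mul_of_nonneg_left (Real.exp_le_exp.mpr (by linarith)) hC₀
        _ ≤ C₀ * Real.exp (3 * ((R' + 3) * Real.log (1 + b * (R' + 3))))
              * Real.exp (‖s‖ ^ (1 + ε)) :=
            le_mul_of_one_le_right (by positivity)
              (Real.one_le_exp (Real.rpow_nonneg hr0 _))
  · -- no bound of order 1 - ε
    intro ε hε
    rintro ⟨C, hC⟩
    have hC0 : 0 ≤ C := by
      have h0 := hC 0
      nlinarith [norm_nonneg (XiQAux.Faux a 0), Real.exp_pos (‖(0:ℂ)‖ ^ (1 - ε))]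
    set e2 : ℝ := Real.exp 2 with he2
    have he2pos : (0:ℝ) < e2 := Real.exp_pos 2
    set D : ℝ := C * (e2 * π) with hD
    have hD0 : 0 ≤ D := by positivity
    have ht := FloorSemiring.tendsto_pow_div_factorial_atTop (e2 * π)
    have hev : ∀ᶠ m : ℕ in Filter.atTop, (e2 * π) ^ m / (m.factorial : ℝ) < 1 / (D + 1) :=
      ht.eventually_lt_const (by positivity)
    obtain ⟨m, hmlt, hm1⟩ := (hev.and (Filter.eventually_ge_atTop 1)).exists
    have hlow := XiQAux.Faux_lower ha hm1
    have hupC := hC ((2 * (m + 1) : ℕ) : ℂ)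
    rw [Complex.norm_natCast] at hupC
    have h1N : (1:ℝ) ≤ ((2 * (m + 1) : ℕ) : ℝ) := by
      exact_mod_cast (by omega : 1 ≤ 2 * (m + 1))
    have hrp : ((2 * (m + 1) : ℕ) : ℝ) ^ (1 - ε) ≤ ((2 * (m + 1) : ℕ) : ℝ) := by
      calc ((2 * (m + 1) : ℕ) : ℝ) ^ (1 - ε) ≤ ((2 * (m + 1) : ℕ) : ℝ) ^ (1:ℝ) :=
            Real.rpow_le_rpow_of_exponent_le h1N (by linarith)
        _ = _ := Real.rpow_one _
    have hBig : (m.factorial : ℝ) / π ^ (m + 1) ≤ C * Real.exp (((2 * (m + 1) : ℕ) : ℝ)) := by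
      refine hlow.trans (hupC.trans ?_)
      exact mul_le_mul_of_nonneg_left (Real.exp_le_exp.mpr hrp) hC0
    have hexp : Real.exp (((2 * (m + 1) : ℕ) : ℝ)) = e2 ^ (m + 1) := by
      rw [he2, show (((2 * (m + 1) : ℕ)) : ℝ) = ((m + 1 : ℕ) : ℝ) * 2 by push_cast; ring,
        Real.exp_nat_mul]
    have hfac0 : (0:ℝ) < (m.factorial : ℝ) := by exact_mod_cast m.factorial_pos
    have hA0 : (0:ℝ) < (e2 * π) ^ m := by positivity
    have hcross : (e2 * π) ^ m * (D + 1) < (m.factorial : ℝ) := by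
      rw [div_lt_div_iff₀ hfac0 (by positivity)] at hmlt
      linarith
    have hfin : (m.factorial : ℝ) ≤ D * (e2 * π) ^ m := by
      have hπ : (0:ℝ) < π ^ (m + 1) := by positivity
      rw [div_le_iff₀ hπ] at hBig
      calc (m.factorial : ℝ) ≤ C * Real.exp (((2 * (m + 1) : ℕ) : ℝ)) * π ^ (m + 1) := hBig
        _ = C * (e2 ^ (m + 1) * π ^ (m + 1)) := by rw [hexp]; ring
        _ = C * (e2 * π) ^ (m + 1) := by rw [mul_pow]
        _ = D * (e2 * π) ^ m := by rw [hD, pow_succ]; ring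
    nlinarith
end

section
/- For every s ∈ ℂ with s ≠ 1, one has 2·Q(s, 1/6) = ((2^s − 1)(3^s − 1) + (2^{1−s} − 1)(3^{1−s} − 1)) · ζ(s), where ζ is the Riemann zeta function; more precisely, ζ(s,1/6) + ζ(s,5/6) = (2^s − 1)(3^s − 1)·ζ(s) and Li_s(e^{πi/3}) + Li_s(e^{5πi/3}) = (2^{1−s} − 1)(3^{1−s} − 1)·ζ(s). -/
open Complex Real Set HurwitzZeta

lemma part2 (s : ℂ) (hs : s ≠ 1) :
    hurwitzZeta ((1 / 6 : ℝ) : UnitAddCircle) s + hurwitzZeta ((5 / 6 : ℝ) : UnitAddCircle) s =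
      ((2 : ℂ) ^ s - 1) * ((3 : ℂ) ^ s - 1) * riemannZeta s := by
  have h := DirichletCharacter.LFunctionTrivChar_eq_mul_riemannZeta (N := 6) hs
  rw [DirichletCharacter.LFunctionTrivChar, DirichletCharacter.LFunction, ZMod.LFunction] at h
  rw [show (Finset.univ : Finset (ZMod 6)) = {0,1,2,3,4,5} from by decide,
    Finset.sum_insert (by decide), Finset.sum_insert (by decide), Finset.sum_insert (by decide),
    Finset.sum_insert (by decide), Finset.sum_insert (by decide), Finset.sum_singleton] at h
  rw [show (6:ℕ).primeFactors = {2,3} by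
        rw [show (6:ℕ) = 2*3 by norm_num, Nat.primeFactors_mul (by norm_num) (by norm_num),
          Nat.Prime.primeFactors (by norm_num), Nat.Prime.primeFactors (by norm_num)]; rfl,
    Finset.prod_insert (by decide), Finset.prod_singleton] at h
  rw [MulChar.map_nonunit _ (show ¬ IsUnit (0 : ZMod 6) by decide),
    MulChar.map_nonunit _ (show ¬ IsUnit (2 : ZMod 6) by decide),
    MulChar.map_nonunit _ (show ¬ IsUnit (3 : ZMod 6) by decide),
    MulChar.map_nonunit _ (show ¬ IsUnit (4 : ZMod 6) by decide),
    MulChar.one_apply (show IsUnit (1 : ZMod 6) by decide),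
    MulChar.one_apply (show IsUnit (5 : ZMod 6) by decide)] at h
  simp only [one_mul, zero_mul, add_zero, zero_add] at h
  rw [ZMod.toAddCircle_apply, ZMod.toAddCircle_apply,
    show (((1:ZMod 6).val : ℝ)/(6:ℕ)) = 1/6 by rw [show (1:ZMod 6).val = 1 from by decide]; norm_num,
    show (((5:ZMod 6).val : ℝ)/(6:ℕ)) = 5/6 by rw [show (5:ZMod 6).val = 5 from by decide]; norm_num] at h
  have h2 : (2:ℂ)^s ≠ 0 := by simp [Complex.cpow_eq_zero_iff]
  have h3 : (3:ℂ)^s ≠ 0 := by simp [Complex.cpow_eq_zero_iff]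
  have h6s : ((6:ℕ):ℂ)^(-s) = ((2:ℂ)^s)⁻¹ * ((3:ℂ)^s)⁻¹ := by
    rw [show ((6:ℕ):ℂ) = ((2:ℝ):ℂ)*((3:ℝ):ℂ) by norm_num,
      mul_cpow_ofReal_nonneg (by norm_num) (by norm_num), cpow_neg, cpow_neg]
    norm_num
  rw [h6s] at h
  have hH : hurwitzZeta ((1/6:ℝ) : UnitAddCircle) s + hurwitzZeta ((5/6:ℝ) : UnitAddCircle) s
      = ((2:ℂ)^s*(3:ℂ)^s) * ((1 - ((2:ℕ):ℂ)^(-s))*(1-((3:ℕ):ℂ)^(-s))*riemannZeta s) := by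
    rw [← h]; field_simp
  rw [hH]
  push_cast
  rw [cpow_neg, cpow_neg]
  field_simp

private lemma omega_pow_six : cexp (π * I / 3) ^ 6 = 1 := by
  rw [← Complex.exp_nat_mul, show (6:ℕ) * (↑π * I / 3) = 2 * π * I by push_cast; ring,
    Complex.exp_two_pi_mul_I]

private lemma omega_sq : cexp (π * I / 3) ^ 2 = cexp (π * I / 3) - 1 := by
  have h : cexp (π * I / 3) = 1/2 + (Real.sqrt 3)/2 * I := by
    rw [show (↑π * I / 3 : ℂ) = ((π/3 : ℝ) : ℂ) * I by push_cast; ring, Complex.exp_mul_I,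
      ← Complex.ofReal_cos, ← Complex.ofReal_sin, Real.cos_pi_div_three, Real.sin_pi_div_three]
    push_cast
    ring
  have h3 : ((Real.sqrt 3 : ℝ) : ℂ)^2 = 3 := by
    rw [← Complex.ofReal_pow, Real.sq_sqrt (by norm_num)]; norm_num
  rw [h]
  linear_combination (((Real.sqrt 3:ℝ):ℂ)^2/4) * Complex.I_sq - (1/4 : ℂ) * h3

private lemma key_coeff (n : ℕ) :
    cexp (π * I / 3) ^ n + cexp (π * I / 3) ^ (5 * n) =
      1 - (if 2 ∣ n then (2:ℂ) else 0) - (if 3 ∣ n then (3:ℂ) else 0)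
        + (if 6 ∣ n then (6:ℂ) else 0) := by
  have h6 := omega_pow_six
  have h2 := omega_sq
  set ω := cexp (π * I / 3) with hω
  have h3 : ω^3 = -1 := by linear_combination (ω + 1) * h2
  have hmod : ∀ m : ℕ, ω ^ m = ω ^ (m % 6) := by
    intro m
    conv_lhs => rw [← Nat.div_add_mod m 6]
    rw [pow_add, pow_mul, h6, one_pow, one_mul]
  rw [hmod n, hmod (5*n)]
  rcases show n % 6 = 0 ∨ n % 6 = 1 ∨ n % 6 = 2 ∨ n % 6 = 3 ∨ n % 6 = 4 ∨ n % 6 = 5 by omega with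
    h|h|h|h|h|h
  · rw [h, show 5*n % 6 = 0 by omega, if_pos (by omega), if_pos (by omega), if_pos (by omega)]
    norm_num
  · rw [h, show 5*n % 6 = 5 by omega, if_neg (by omega), if_neg (by omega), if_neg (by omega)]
    have h5 : ω^5 = ω^3 * ω^2 := by ring
    rw [h5, h3, h2]; ring
  · rw [h, show 5*n % 6 = 4 by omega, if_pos (by omega), if_neg (by omega), if_neg (by omega)]
    have h4 : ω^4 = ω^3 * ω := by ring
    rw [h4, h3, h2]; ring
  · rw [h, show 5*n % 6 = 3 by omega, if_neg (by omega), if_pos (by omega), if_neg (by omega)]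
    rw [h3]; ring
  · rw [h, show 5*n % 6 = 2 by omega, if_pos (by omega), if_neg (by omega), if_neg (by omega)]
    have h4 : ω^4 = ω^3 * ω := by ring
    rw [h4, h3, h2]; ring
  · rw [h, show 5*n % 6 = 1 by omega, if_neg (by omega), if_neg (by omega), if_neg (by omega)]
    have h5 : ω^5 = ω^3 * ω^2 := by ring
    rw [h5, h3, h2]; ring

private lemma hasSum_div_pow (k : ℕ) (hk : 2 ≤ k) {s : ℂ} (hs : 1 < re s) :
    HasSum (fun n : ℕ ↦ (if k ∣ n then (k:ℂ) else 0) / (n:ℂ) ^ s)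
      ((k:ℂ) ^ (1 - s) * riemannZeta s) := by
  have hζ : HasSum (fun n : ℕ ↦ 1 / (n:ℂ) ^ s) (riemannZeta s) := by
    have := hasSum_expZeta_of_one_lt_re 0 hs
    rw [show ((0:ℝ) : UnitAddCircle) = 0 by norm_num, expZeta_zero] at this
    simpa using this
  have hk0 : (k:ℂ) ≠ 0 := Nat.cast_ne_zero.mpr (by omega)
  have hinj : Function.Injective (fun n : ℕ => k * n) :=
    fun a b hab => by simpa using Nat.eq_of_mul_eq_mul_left (by omega) hab
  have hvan : ∀ n ∉ Set.range (fun m : ℕ => k * m),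
      (if k ∣ n then (k:ℂ) else 0) / (n:ℂ) ^ s = 0 := by
    intro n hn
    rw [if_neg, zero_div]
    rintro ⟨m, rfl⟩
    exact hn ⟨m, rfl⟩
  refine (hinj.hasSum_iff hvan).mp ?_
  have := hζ.mul_left ((k:ℂ) ^ (1-s))
  refine this.congr_fun fun m => ?_
  have hcpow : ((k:ℂ) * (m:ℂ)) ^ s = (k:ℂ)^s * (m:ℂ)^s := by
    rw [show ((k:ℕ):ℂ) = (((k:ℕ):ℝ):ℂ) by push_cast; ring,
      show ((m:ℕ):ℂ) = (((m:ℕ):ℝ):ℂ) by push_cast; ring,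
      ← mul_cpow_ofReal_nonneg (by positivity) (by positivity)]
  simp only [Function.comp_apply]
  rw [if_pos (dvd_mul_right k m), Nat.cast_mul, hcpow, cpow_sub _ _ hk0, cpow_one,
    mul_one_div, div_div]

private lemma part3_sum {s : ℂ} (hs : 1 < re s) :
    expZeta ((1 / 6 : ℝ) : UnitAddCircle) s + expZeta ((5 / 6 : ℝ) : UnitAddCircle) s =
      ((2 : ℂ) ^ (1 - s) - 1) * ((3 : ℂ) ^ (1 - s) - 1) * riemannZeta s := by
  have hζ : HasSum (fun n : ℕ ↦ 1 / (n:ℂ) ^ s) (riemannZeta s) := by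
    have := hasSum_expZeta_of_one_lt_re 0 hs
    rw [show ((0:ℝ) : UnitAddCircle) = 0 by norm_num, expZeta_zero] at this
    simpa using this
  have hA := hasSum_div_pow 2 le_rfl hs
  have hB := hasSum_div_pow 3 (by norm_num) hs
  have hC := hasSum_div_pow 6 (by norm_num) hs
  have hT := ((hζ.sub hA).sub hB).add hC
  have hL := (hasSum_expZeta_of_one_lt_re (1/6) hs).add (hasSum_expZeta_of_one_lt_re (5/6) hs)
  have hL' : HasSum (fun n : ℕ ↦ (1 / (n:ℂ)^s - (if 2 ∣ n then (2:ℂ) else 0) / (n:ℂ)^s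
        - (if 3 ∣ n then (3:ℂ) else 0) / (n:ℂ)^s) + (if 6 ∣ n then (6:ℂ) else 0) / (n:ℂ)^s)
      (expZeta ((1 / 6 : ℝ) : UnitAddCircle) s + expZeta ((5 / 6 : ℝ) : UnitAddCircle) s) := by
    refine hL.congr_fun fun n => ?_
    rw [show cexp (2 * π * I * ((1/6 : ℝ):ℂ) * n) = cexp (π * I / 3) ^ n by
        rw [← Complex.exp_nat_mul]; congr 1; push_cast; ring,
      show cexp (2 * π * I * ((5/6 : ℝ):ℂ) * n) = cexp (π * I / 3) ^ (5 * n) by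
        rw [← Complex.exp_nat_mul]; congr 1; push_cast; ring,
      ← add_div, key_coeff]
    ring
  have := hT.unique hL'
  rw [← this]
  have h6s : (6:ℂ)^(1-s) = (2:ℂ)^(1-s) * (3:ℂ)^(1-s) := by
    rw [show (6:ℂ) = ((2:ℝ):ℂ)*((3:ℝ):ℂ) by norm_num,
      mul_cpow_ofReal_nonneg (by norm_num) (by norm_num)]
    norm_num
  push_cast
  rw [h6s]
  ring

private lemma unitAddCircle_ne_zero {x : ℝ} (h0 : 0 < x) (h1 : x < 1) :
    ((x : ℝ) : UnitAddCircle) ≠ 0 := by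
  intro h
  rw [AddCircle.coe_eq_zero_iff] at h
  obtain ⟨n, hn⟩ := h
  rw [zsmul_eq_mul, mul_one] at hn
  have : (0:ℝ) < n := hn ▸ h0
  have : (n:ℝ) < 1 := hn ▸ h1
  have h1 : 0 < n := by exact_mod_cast ‹(0:ℝ) < n›
  have h2 : n < 1 := by exact_mod_cast ‹(n:ℝ) < 1›
  omega

private lemma part3 (s : ℂ) (hs : s ≠ 1) :
    expZeta ((1 / 6 : ℝ) : UnitAddCircle) s + expZeta ((5 / 6 : ℝ) : UnitAddCircle) s =
      ((2 : ℂ) ^ (1 - s) - 1) * ((3 : ℂ) ^ (1 - s) - 1) * riemannZeta s := by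
  have ha : ((1/6 : ℝ) : UnitAddCircle) ≠ 0 := unitAddCircle_ne_zero (by norm_num) (by norm_num)
  have hb : ((5/6 : ℝ) : UnitAddCircle) ≠ 0 := unitAddCircle_ne_zero (by norm_num) (by norm_num)
  set f := fun z : ℂ => expZeta ((1 / 6 : ℝ) : UnitAddCircle) z
    + expZeta ((5 / 6 : ℝ) : UnitAddCircle) z with hf
  set g := fun z : ℂ => ((2 : ℂ) ^ (1 - z) - 1) * ((3 : ℂ) ^ (1 - z) - 1) * riemannZeta z with hg
  have hfa : AnalyticOnNhd ℂ f {(1:ℂ)}ᶜ := by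
    apply DifferentiableOn.analyticOnNhd _ isOpen_compl_singleton
    exact ((differentiable_expZeta_of_ne_zero ha).add
      (differentiable_expZeta_of_ne_zero hb)).differentiableOn
  have hga : AnalyticOnNhd ℂ g {(1:ℂ)}ᶜ := by
    apply DifferentiableOn.analyticOnNhd _ isOpen_compl_singleton
    intro z hz
    refine DifferentiableAt.differentiableWithinAt ?_
    have hd : DifferentiableAt ℂ (fun z : ℂ => (1 : ℂ) - z) z :=
      (differentiable_const _).sub differentiable_id |>.differentiableAt
    exact (((hd.const_cpow (Or.inl two_ne_zero)).sub (differentiableAt_const 1)).mul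
      ((hd.const_cpow (Or.inl three_ne_zero)).sub (differentiableAt_const 1))).mul
      (differentiableAt_riemannZeta hz)
  have hpre : IsPreconnected ({(1:ℂ)}ᶜ : Set ℂ) :=
    (isConnected_compl_singleton_of_one_lt_rank (by simp) _).isPreconnected
  have h2mem : (2:ℂ) ∈ ({(1:ℂ)}ᶜ : Set ℂ) := by norm_num
  have hev : f =ᶠ[nhds (2:ℂ)] g := by
    have hopen : IsOpen {z : ℂ | 1 < re z} := isOpen_lt continuous_const continuous_re
    have hmem : {z : ℂ | 1 < re z} ∈ nhds (2:ℂ) := hopen.mem_nhds (by norm_num)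
    filter_upwards [hmem] with z hz
    exact part3_sum hz
  exact hfa.eqOn_of_preconnected_of_eventuallyEq hga hpre h2mem hev hs

/-- For `s ≠ 1`: `2Q(s,1/6) = ((2^s-1)(3^s-1) + (2^{1-s}-1)(3^{1-s}-1)) ζ(s)`; more precisely
`ζ(s,1/6) + ζ(s,5/6) = (2^s-1)(3^s-1) ζ(s)` and
`Li_s(e^{πi/3}) + Li_s(e^{5πi/3}) = (2^{1-s}-1)(3^{1-s}-1) ζ(s)`. -/
theorem quadrilateral_zeta_one_sixth_factorization (s : ℂ) (hs : s ≠ 1) :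
    2 * Q (1 / 6) s =
      (((2 : ℂ) ^ s - 1) * ((3 : ℂ) ^ s - 1) +
        ((2 : ℂ) ^ (1 - s) - 1) * ((3 : ℂ) ^ (1 - s) - 1)) * riemannZeta s ∧
    hurwitzZeta ((1 / 6 : ℝ) : UnitAddCircle) s + hurwitzZeta ((5 / 6 : ℝ) : UnitAddCircle) s =
      ((2 : ℂ) ^ s - 1) * ((3 : ℂ) ^ s - 1) * riemannZeta s ∧
    expZeta ((1 / 6 : ℝ) : UnitAddCircle) s + expZeta ((5 / 6 : ℝ) : UnitAddCircle) s =
      ((2 : ℂ) ^ (1 - s) - 1) * ((3 : ℂ) ^ (1 - s) - 1) * riemannZeta s := by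
  refine ⟨?_, part2 s hs, part3 s hs⟩
  have h2 := part2 s hs
  have h3 := part3 s hs
  rw [Q, show (1 - 1/6 : ℝ) = 5/6 by norm_num]
  linear_combination h2 + h3
end
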